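/- arXiv:0802.1198 — 4 statements merged into one kernel-verified Lean document; each statement's English description precedes it below -/
import Mathlib

section
/- Let R and S be semiprime idempotent rings admitting a surjective Morita context (R, S, N, M, φ, ψ). Then R coincides with its socle if and only if S coincides with its socle, i.e. R = soc(R) if and only if S = soc(S). -/
set_option synthInstance.maxHeartbeats 1000000
set_option maxHeartbeats 1000000

noncomputable section

/-! ## Ring-theoretic notions for (possibly non-unital) rings -/

section RingNotions

variable {R : Type} [NonUnitalNonAssocRing R]

/-- A left ideal of a (possibly non-unital) ring: an additive subgroup closed under
left multiplication by arbitrary ring elements. -/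
def IsLeftIdeal (I : AddSubgroup R) : Prop := ∀ a : R, ∀ x ∈ I, a * x ∈ I

/-- A two-sided ideal of a (possibly non-unital) ring. -/
def IsTwoSidedIdealSG (I : AddSubgroup R) : Prop :=
  ∀ a : R, ∀ x ∈ I, a * x ∈ I ∧ x * a ∈ I

/-- A minimal left ideal: a nonzero left ideal properly containing no nonzero
left ideal. -/
def IsMinimalLeftIdeal (I : AddSubgroup R) : Prop :=
  IsLeftIdeal I ∧ I ≠ ⊥ ∧ ∀ J : AddSubgroup R, IsLeftIdeal J → J < I → J = ⊥

/-- The socle of a ring: the sum of all its minimal left ideals (the zero ideal if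
there are none). -/
def rsocle (R : Type) [NonUnitalNonAssocRing R] : AddSubgroup R :=
  sSup {I : AddSubgroup R | IsMinimalLeftIdeal I}

/-- The two-sided ideal generated by a subset of a ring. -/
def idealGenBy (S : Set R) : AddSubgroup R :=
  sInf {I : AddSubgroup R | S ⊆ ↑I ∧ IsTwoSidedIdealSG I}

/-- A ring is semiprime if it has no nonzero two-sided ideal with zero square. -/
def IsSemiprimeRing (R : Type) [NonUnitalNonAssocRing R] : Prop :=
  ∀ I : AddSubgroup R, IsTwoSidedIdealSG I → (∀ x ∈ I, ∀ y ∈ I, x * y = 0) → I = ⊥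

/-- An idempotent ring: `R² = R`, i.e. every element is a sum of products. -/
def IsIdempotentRing (R : Type) [NonUnitalNonAssocRing R] : Prop :=
  ∀ x : R, x ∈ AddSubgroup.closure {y : R | ∃ a b : R, y = a * b}

/-- The principal left ideal `R·a = {x * a : x ∈ R}`. -/
def principalLeft (a : R) : AddSubgroup R where
  carrier := Set.range fun x : R => x * a
  add_mem' := by rintro _ _ ⟨x, rfl⟩ ⟨y, rfl⟩; exact ⟨x + y, add_mul x y a⟩
  zero_mem' := ⟨0, zero_mul a⟩
  neg_mem' := by rintro _ ⟨x, rfl⟩; exact ⟨-x, neg_mul x a⟩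

theorem principalLeft.mul_mem {R : Type} [NonUnitalRing R] (a b : R) {x : R}
    (hx : x ∈ principalLeft a) : b * x ∈ principalLeft a := by
  obtain ⟨y, rfl⟩ := hx
  exact ⟨b * y, by simp only []; rw [mul_assoc]⟩

end RingNotions

section MoritaAux

variable {R : Type} [NonUnitalRing R]

private def mulLeftHom (a : R) : R →+ R :=
  AddMonoidHom.mk' (fun x => a * x) (mul_add a)

private def mulRightHom (a : R) : R →+ R :=
  AddMonoidHom.mk' (fun x => x * a) (fun x y => add_mul x y a)

theorem left_ideal_sq_zero (hsp : IsSemiprimeRing R) (L : AddSubgroup R)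
    (hL : IsLeftIdeal L) (h2 : ∀ x ∈ L, ∀ y ∈ L, x * y = 0) : L = ⊥ := by
  set g : Set R := ↑L ∪ {y | ∃ x ∈ L, ∃ r : R, y = x * r} with hg
  set T : AddSubgroup R := AddSubgroup.closure g with hT
  have hsub : g ⊆ ↑T := AddSubgroup.subset_closure
  have hLT : (L : Set R) ⊆ ↑T := fun x hx => hsub (Or.inl hx)
  have hts : IsTwoSidedIdealSG T := by
    intro a x hx
    have hle : T ≤ (T.comap (mulLeftHom a)) ⊓ (T.comap (mulRightHom a)) := by
      refine (AddSubgroup.closure_le _).mpr ?_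
      rintro y (hy | ⟨x', hx', r, rfl⟩)
      · refine AddSubgroup.mem_inf.mpr ⟨?_, ?_⟩
        · exact AddSubgroup.mem_comap.mpr (hLT (hL a y hy))
        · exact AddSubgroup.mem_comap.mpr (hsub (Or.inr ⟨y, hy, a, rfl⟩))
      · refine AddSubgroup.mem_inf.mpr ⟨?_, ?_⟩
        · refine AddSubgroup.mem_comap.mpr ?_
          show a * (x' * r) ∈ T
          rw [← mul_assoc]
          exact hsub (Or.inr ⟨a * x', hL a x' hx', r, rfl⟩)
        · refine AddSubgroup.mem_comap.mpr ?_
          show (x' * r) * a ∈ T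
          rw [mul_assoc]
          exact hsub (Or.inr ⟨x', hx', r * a, rfl⟩)
    have := AddSubgroup.mem_inf.mp (hle hx)
    exact ⟨AddSubgroup.mem_comap.mp this.1, AddSubgroup.mem_comap.mp this.2⟩
  have hgg : ∀ x ∈ g, ∀ y ∈ g, x * y = 0 := by
    rintro x (hx | ⟨x', hx', r, rfl⟩) y (hy | ⟨y', hy', s, rfl⟩)
    · exact h2 x hx y hy
    · rw [← mul_assoc, h2 x hx y' hy', zero_mul]
    · rw [mul_assoc, h2 x' hx' (r * y) (hL r y hy)]
    · have hre : x' * r * (y' * s) = (x' * (r * y')) * s := by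
        rw [mul_assoc x' r (y' * s), mul_assoc x' (r * y') s, mul_assoc r y' s]
      rw [hre, h2 x' hx' (r * y') (hL r y' hy'), zero_mul]
  have hT2 : ∀ x ∈ T, ∀ y ∈ T, x * y = 0 := by
    have h1 : ∀ x ∈ g, ∀ y ∈ T, x * y = 0 := by
      intro x hx
      have hle : T ≤ AddSubgroup.comap (mulLeftHom x) ⊥ := by
        refine (AddSubgroup.closure_le _).mpr fun y hy => ?_
        refine AddSubgroup.mem_comap.mpr ?_
        rw [AddSubgroup.mem_bot]
        exact hgg x hx y hy
      intro y hy
      exact AddSubgroup.mem_bot.mp (AddSubgroup.mem_comap.mp (hle hy))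
    intro x hx y hy
    have hle : T ≤ AddSubgroup.comap (mulRightHom y) ⊥ := by
      refine (AddSubgroup.closure_le _).mpr fun z hz => ?_
      refine AddSubgroup.mem_comap.mpr ?_
      rw [AddSubgroup.mem_bot]
      exact h1 z hz y hy
    exact AddSubgroup.mem_bot.mp (AddSubgroup.mem_comap.mp (hle hx))
  have hTbot := hsp T hts hT2
  refine (AddSubgroup.eq_bot_iff_forall L).mpr fun x hx => ?_
  exact (AddSubgroup.eq_bot_iff_forall T).mp hTbot x (hLT hx)

theorem brauer_idem (hsp : IsSemiprimeRing R) {I : AddSubgroup R}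
    (hI : IsMinimalLeftIdeal I) :
    ∃ e : R, e ≠ 0 ∧ e * e = e ∧ I = principalLeft e := by
  obtain ⟨hIl, hI0, hImin⟩ := hI
  have hnz : ¬ ∀ x ∈ I, ∀ y ∈ I, x * y = 0 := fun h => hI0 (left_ideal_sq_zero hsp I hIl h)
  push_neg at hnz
  obtain ⟨x₀, hx₀, a, ha, hxa⟩ := hnz
  have ha0 : a ≠ 0 := by rintro rfl; exact hxa (mul_zero x₀)
  set Ia : AddSubgroup R := I.map (mulRightHom a) with hIa
  have hIale : Ia ≤ I := by
    intro z hz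
    obtain ⟨x, hx, rfl⟩ := AddSubgroup.mem_map.mp hz
    exact hIl x a ha
  have hIaleft : IsLeftIdeal Ia := by
    intro r z hz
    obtain ⟨x, hx, rfl⟩ := AddSubgroup.mem_map.mp hz
    refine AddSubgroup.mem_map.mpr ⟨r * x, hIl r x hx, ?_⟩
    show r * x * a = r * (x * a)
    rw [mul_assoc]
  have hIane : Ia ≠ ⊥ := by
    intro h
    exact hxa ((AddSubgroup.eq_bot_iff_forall Ia).mp h _
      (AddSubgroup.mem_map.mpr ⟨x₀, hx₀, rfl⟩))
  have hIaeq : Ia = I := (lt_or_eq_of_le hIale).resolve_left fun h => hIane (hImin Ia hIaleft h)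
  obtain ⟨e, he, hea⟩ : ∃ x ∈ I, x * a = a := by
    have : a ∈ Ia := hIaeq ▸ ha
    obtain ⟨x, hx, hxe⟩ := AddSubgroup.mem_map.mp this
    exact ⟨x, hx, hxe⟩
  have ann : I ⊓ AddSubgroup.comap (mulRightHom a) ⊥ = ⊥ := by
    refine hImin _ ?_ ?_
    · intro r x hx
      obtain ⟨hxI, hx0⟩ := AddSubgroup.mem_inf.mp hx
      refine AddSubgroup.mem_inf.mpr ⟨hIl r x hxI, ?_⟩
      refine AddSubgroup.mem_comap.mpr ?_
      rw [AddSubgroup.mem_bot]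
      show r * x * a = 0
      have hx0' : x * a = 0 := AddSubgroup.mem_bot.mp (AddSubgroup.mem_comap.mp hx0)
      rw [mul_assoc, hx0', mul_zero]
    · refine lt_of_le_of_ne inf_le_left fun h => ?_
      have he' : e ∈ I ⊓ AddSubgroup.comap (mulRightHom a) ⊥ := by rw [h]; exact he
      have h0 : e * a = 0 :=
        AddSubgroup.mem_bot.mp (AddSubgroup.mem_comap.mp (AddSubgroup.mem_inf.mp he').2)
      rw [hea] at h0
      exact ha0 h0
  have hee : e * e = e := by
    have hmem : e * e - e ∈ I ⊓ AddSubgroup.comap (mulRightHom a) ⊥ := by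
      refine AddSubgroup.mem_inf.mpr ⟨AddSubgroup.sub_mem I (hIl e e he) he, ?_⟩
      refine AddSubgroup.mem_comap.mpr ?_
      rw [AddSubgroup.mem_bot]
      show (e * e - e) * a = 0
      rw [sub_mul, mul_assoc, hea, hea, sub_self]
    have h0 : e * e - e = 0 := by
      have := ann ▸ hmem
      exact AddSubgroup.mem_bot.mp this
    exact sub_eq_zero.mp h0
  have he0 : e ≠ 0 := by
    rintro rfl
    rw [zero_mul] at hea
    exact ha0 hea.symm
  have hple : principalLeft e ≤ I := by rintro _ ⟨r, rfl⟩; exact hIl r e he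
  have hpne : principalLeft e ≠ ⊥ := fun h =>
    he0 ((AddSubgroup.eq_bot_iff_forall _).mp h e ⟨e, hee⟩)
  have heq : principalLeft e = I := (lt_or_eq_of_le hple).resolve_left fun h =>
    hpne (hImin _ (fun r x hx => principalLeft.mul_mem e r hx) h)
  exact ⟨e, he0, hee, heq.symm⟩

theorem min_inv {e : R} (hee : e * e = e)
    (hmin : IsMinimalLeftIdeal (principalLeft e)) {x : R}
    (hx : x ∈ principalLeft e) (hx0 : x ≠ 0) : ∃ y : R, y * x = e := by
  obtain ⟨w, rfl⟩ := hx
  have hle : principalLeft (w * e) ≤ principalLeft e := by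
    rintro _ ⟨r, rfl⟩
    exact ⟨r * w, show r * w * e = r * (w * e) from mul_assoc r w e⟩
  by_cases hbot : principalLeft (w * e) = ⊥
  · exfalso
    have hRx0 : ∀ r : R, r * (w * e) = 0 := fun r =>
      (AddSubgroup.eq_bot_iff_forall _).mp hbot _ ⟨r, rfl⟩
    have hZleft : IsLeftIdeal (AddSubgroup.closure {w * e}) := by
      intro r z hz
      have hle' : AddSubgroup.closure {w * e} ≤ AddSubgroup.comap (mulLeftHom r) ⊥ := by
        refine (AddSubgroup.closure_le _).mpr ?_
        intro z' hz'
        rw [Set.mem_singleton_iff] at hz'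
        subst hz'
        refine AddSubgroup.mem_comap.mpr ?_
        rw [AddSubgroup.mem_bot]
        exact hRx0 r
      have h0 : r * z = 0 := AddSubgroup.mem_bot.mp (AddSubgroup.mem_comap.mp (hle' hz))
      rw [h0]
      exact zero_mem _
    have hZle : AddSubgroup.closure {w * e} ≤ principalLeft e :=
      (AddSubgroup.closure_le _).mpr (by
        intro z hz
        rw [Set.mem_singleton_iff] at hz
        subst hz
        exact ⟨w, rfl⟩)
    have hZne : AddSubgroup.closure {w * e} ≠ ⊥ := fun h =>
      hx0 ((AddSubgroup.eq_bot_iff_forall _).mp h _ (AddSubgroup.subset_closure rfl))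
    have hZeq : AddSubgroup.closure {w * e} = principalLeft e :=
      (lt_or_eq_of_le hZle).resolve_left fun h => hZne (hmin.2.2 _ hZleft h)
    have he_mem : e ∈ AddSubgroup.closure {w * e} := by
      rw [hZeq]
      exact ⟨e, hee⟩
    obtain ⟨k, hk⟩ := AddSubgroup.mem_closure_singleton.mp he_mem
    have he0 : e = 0 := by
      have h1 : e = e * (k • (w * e)) := by rw [hk, hee]
      have h2 : e * (k • (w * e)) = k • (e * (w * e)) := map_zsmul (mulLeftHom e) k (w * e)
      rw [hRx0 e, smul_zero] at h2
      rw [h1, h2]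
    apply hmin.2.1
    refine (AddSubgroup.eq_bot_iff_forall _).mpr ?_
    rintro _ ⟨r, rfl⟩
    show r * e = 0
    rw [he0, mul_zero]
  · have heq : principalLeft (w * e) = principalLeft e :=
      (lt_or_eq_of_le hle).resolve_left fun h =>
        hbot (hmin.2.2 _ (fun r x hx => principalLeft.mul_mem _ r hx) h)
    have : e ∈ principalLeft (w * e) := by
      rw [heq]
      exact ⟨e, hee⟩
    obtain ⟨y, hy⟩ := this
    exact ⟨y, hy⟩

theorem morita_socle_forward
    {R S N M : Type} [NonUnitalRing R] [NonUnitalRing S]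
    [AddCommGroup N] [AddCommGroup M]
    (hRid : IsIdempotentRing R) (hSid : IsIdempotentRing S)
    (hRsp : IsSemiprimeRing R) (hSsp : IsSemiprimeRing S)
    (rn : R → N → N) (ns : N → S → N)
    (hrn_addl : ∀ (r₁ r₂ : R) (n : N), rn (r₁ + r₂) n = rn r₁ n + rn r₂ n)
    (hrn_addr : ∀ (a : R) (n₁ n₂ : N), rn a (n₁ + n₂) = rn a n₁ + rn a n₂)
    (hrn_mul : ∀ (r₁ r₂ : R) (n : N), rn (r₁ * r₂) n = rn r₁ (rn r₂ n))
    (hns_addl : ∀ (n₁ n₂ : N) (t : S), ns (n₁ + n₂) t = ns n₁ t + ns n₂ t)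
    (hns_addr : ∀ (n : N) (t₁ t₂ : S), ns n (t₁ + t₂) = ns n t₁ + ns n t₂)
    (hns_mul : ∀ (n : N) (t₁ t₂ : S), ns (ns n t₁) t₂ = ns n (t₁ * t₂))
    (hN_bimod : ∀ (a : R) (n : N) (t : S), ns (rn a n) t = rn a (ns n t))
    (sm : S → M → M) (mr : M → R → M)
    (hsm_addl : ∀ (t₁ t₂ : S) (m : M), sm (t₁ + t₂) m = sm t₁ m + sm t₂ m)
    (hsm_addr : ∀ (t : S) (m₁ m₂ : M), sm t (m₁ + m₂) = sm t m₁ + sm t m₂)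
    (hsm_mul : ∀ (t₁ t₂ : S) (m : M), sm (t₁ * t₂) m = sm t₁ (sm t₂ m))
    (hmr_addl : ∀ (m₁ m₂ : M) (a : R), mr (m₁ + m₂) a = mr m₁ a + mr m₂ a)
    (hmr_addr : ∀ (m : M) (a₁ a₂ : R), mr m (a₁ + a₂) = mr m a₁ + mr m a₂)
    (hmr_mul : ∀ (m : M) (a₁ a₂ : R), mr (mr m a₁) a₂ = mr m (a₁ * a₂))
    (hM_bimod : ∀ (t : S) (m : M) (a : R), mr (sm t m) a = sm t (mr m a))
    (φ : N → M → R) (ψ : M → N → S)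
    (hφ_addl : ∀ (n₁ n₂ : N) (m : M), φ (n₁ + n₂) m = φ n₁ m + φ n₂ m)
    (hφ_addr : ∀ (n : N) (m₁ m₂ : M), φ n (m₁ + m₂) = φ n m₁ + φ n m₂)
    (hψ_addl : ∀ (m₁ m₂ : M) (n : N), ψ (m₁ + m₂) n = ψ m₁ n + ψ m₂ n)
    (hψ_addr : ∀ (m : M) (n₁ n₂ : N), ψ m (n₁ + n₂) = ψ m n₁ + ψ m n₂)
    (hφ_left : ∀ (a : R) (n : N) (m : M), φ (rn a n) m = a * φ n m)
    (hφ_right : ∀ (n : N) (m : M) (a : R), φ n (mr m a) = φ n m * a)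
    (hφ_bal : ∀ (n : N) (t : S) (m : M), φ (ns n t) m = φ n (sm t m))
    (hψ_left : ∀ (t : S) (m : M) (n : N), ψ (sm t m) n = t * ψ m n)
    (hψ_right : ∀ (m : M) (n : N) (t : S), ψ m (ns n t) = ψ m n * t)
    (hψ_bal : ∀ (m : M) (a : R) (n : N), ψ (mr m a) n = ψ m (rn a n))
    (hassoc₁ : ∀ (n : N) (m : M) (n' : N), rn (φ n m) n' = ns n (ψ m n'))
    (hassoc₂ : ∀ (m : M) (n : N) (m' : M), sm (ψ m n) m' = mr m (φ n m'))
    (hφ_surj : ∀ x : R, x ∈ AddSubgroup.closure (Set.range fun p : N × M => φ p.1 p.2))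
    (hψ_surj : ∀ y : S, y ∈ AddSubgroup.closure (Set.range fun p : M × N => ψ p.1 p.2)) :
    rsocle R = ⊤ → rsocle S = ⊤ := by
  intro hR
  have hψ0 : ∀ m' : M, ψ m' (0 : N) = 0 :=
    fun m' => (AddMonoidHom.mk' (ψ m') (hψ_addr m')).map_zero
  -- Key step: for an idempotent e generating a minimal left ideal and n with e·n = n,
  -- all ψ m n lie in the socle of S.
  have key1 : ∀ e : R, e * e = e → IsMinimalLeftIdeal (principalLeft e) →
      ∀ n : N, rn e n = n → ∀ m : M, ψ m n ∈ rsocle S := by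
    intro e hee hmin n hn m
    set f : M →+ S := AddMonoidHom.mk' (fun m => ψ m n) (fun a b => hψ_addl a b n) with hf
    set J : AddSubgroup S := f.range with hJdef
    have hmemJ : ∀ m' : M, ψ m' n ∈ J := fun m' => AddMonoidHom.mem_range.mpr ⟨m', rfl⟩
    have hJleft : IsLeftIdeal J := by
      intro s x hx
      obtain ⟨m', rfl⟩ := AddMonoidHom.mem_range.mp hx
      exact AddMonoidHom.mem_range.mpr ⟨sm s m', hψ_left s m' n⟩
    by_cases hJbot : J = ⊥
    · have h0 : ψ m n = 0 := (AddSubgroup.eq_bot_iff_forall J).mp hJbot _ (hmemJ m)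
      rw [h0]
      exact zero_mem _
    · have hJmin : IsMinimalLeftIdeal J := by
        refine ⟨hJleft, hJbot, ?_⟩
        intro J' hJ'left hlt
        by_contra hne
        obtain ⟨k, hkJ', hk0⟩ : ∃ k ∈ J', k ≠ 0 := by
          by_contra h
          push_neg at h
          exact hne ((AddSubgroup.eq_bot_iff_forall J').mpr h)
        obtain ⟨m₀, hm₀⟩ := AddMonoidHom.mem_range.mp (hlt.le hkJ')
        have hm₀' : ψ m₀ n = k := hm₀
        have hstep : ∃ n₀ : N, rn (φ n₀ m₀) n ≠ 0 := by
          by_contra hall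
          push_neg at hall
          have hk0' : ∀ s : S, s * k = 0 := by
            intro s
            have hle : AddSubgroup.closure (Set.range fun p : M × N => ψ p.1 p.2) ≤
                AddSubgroup.comap
                  (AddMonoidHom.mk' (fun s : S => s * k) (fun a b => add_mul a b k)) ⊥ := by
              refine (AddSubgroup.closure_le _).mpr ?_
              rintro _ ⟨⟨m', n'⟩, rfl⟩
              refine AddSubgroup.mem_comap.mpr ?_
              rw [AddSubgroup.mem_bot]
              show ψ m' n' * k = 0
              rw [← hm₀', ← hψ_right, ← hassoc₁, hall n', hψ0]
            exact AddSubgroup.mem_bot.mp (AddSubgroup.mem_comap.mp (hle (hψ_surj s)))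
          have hcl_left : IsLeftIdeal (AddSubgroup.closure {k}) := by
            intro s z hz
            have hle : AddSubgroup.closure {k} ≤ AddSubgroup.comap
                (AddMonoidHom.mk' (fun x : S => s * x) (mul_add s)) ⊥ := by
              refine (AddSubgroup.closure_le _).mpr ?_
              intro z' hz'
              rw [Set.mem_singleton_iff] at hz'
              refine AddSubgroup.mem_comap.mpr ?_
              rw [AddSubgroup.mem_bot]
              show s * z' = 0
              rw [hz']
              exact hk0' s
            have h0 : s * z = 0 := AddSubgroup.mem_bot.mp (AddSubgroup.mem_comap.mp (hle hz))
            rw [h0]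
            exact zero_mem _
          have hsq : ∀ x ∈ AddSubgroup.closure {k}, ∀ y ∈ AddSubgroup.closure {k},
              x * y = 0 := by
            have h1 : ∀ y ∈ AddSubgroup.closure {k}, k * y = 0 := by
              intro y hy
              have hle : AddSubgroup.closure {k} ≤ AddSubgroup.comap
                  (AddMonoidHom.mk' (fun x : S => k * x) (mul_add k)) ⊥ := by
                refine (AddSubgroup.closure_le _).mpr ?_
                intro z' hz'
                rw [Set.mem_singleton_iff] at hz'
                refine AddSubgroup.mem_comap.mpr ?_
                rw [AddSubgroup.mem_bot]
                show k * z' = 0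
                rw [hz']
                exact hk0' k
              exact AddSubgroup.mem_bot.mp (AddSubgroup.mem_comap.mp (hle hy))
            intro x hx y hy
            have hle : AddSubgroup.closure {k} ≤ AddSubgroup.comap
                (AddMonoidHom.mk' (fun z : S => z * y) (fun a b => add_mul a b y)) ⊥ := by
              refine (AddSubgroup.closure_le _).mpr ?_
              intro z' hz'
              rw [Set.mem_singleton_iff] at hz'
              refine AddSubgroup.mem_comap.mpr ?_
              rw [AddSubgroup.mem_bot]
              show z' * y = 0
              rw [hz']
              exact h1 y hy
            exact AddSubgroup.mem_bot.mp (AddSubgroup.mem_comap.mp (hle hx))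
          have hbot := left_ideal_sq_zero hSsp _ hcl_left hsq
          exact hk0 ((AddSubgroup.eq_bot_iff_forall _).mp hbot k
            (AddSubgroup.subset_closure (Set.mem_singleton k)))
        obtain ⟨n₀, hn₀⟩ := hstep
        set c := φ n₀ m₀ with hc
        have hxne : c * e ≠ 0 := by
          intro h
          have hkey : rn (c * e) n = rn c n := by rw [hrn_mul, hn]
          rw [h] at hkey
          have h0 : rn (0 : R) n = 0 :=
            (AddMonoidHom.mk' (fun a => rn a n) (fun a b => hrn_addl a b n)).map_zero
          rw [h0] at hkey
          exact hn₀ hkey.symm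
        obtain ⟨y, hy⟩ := min_inv hee hmin (⟨c, rfl⟩ : c * e ∈ principalLeft e) hxne
        have hdn : rn (y * c) n = n := by
          have h2 : y * c * e = e := by rw [mul_assoc]; exact hy
          calc rn (y * c) n = rn (y * c) (rn e n) := by rw [hn]
            _ = rn (y * c * e) n := (hrn_mul _ _ _).symm
            _ = rn e n := by rw [h2]
            _ = n := hn
        have hd : φ (rn y n₀) m₀ = y * c := hφ_left y n₀ m₀
        have hJle : J ≤ J' := by
          intro x hx
          obtain ⟨m', rfl⟩ := AddMonoidHom.mem_range.mp hx
          show ψ m' n ∈ J'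
          have heq : ψ m' n = ψ m' (rn y n₀) * k := by
            rw [← hm₀', ← hψ_right, ← hassoc₁, hd, hdn]
          rw [heq]
          exact hJ'left _ k hkJ'
        exact absurd hJle (not_le_of_gt hlt)
      show ψ m n ∈ sSup {I : AddSubgroup S | IsMinimalLeftIdeal I}
      exact le_sSup (show J ∈ {I : AddSubgroup S | IsMinimalLeftIdeal I} from hJmin) (hmemJ m)
  -- ψ m (a·n) is always in the socle of S
  have keyB : ∀ (a : R) (m : M) (nn : N), ψ m (rn a nn) ∈ rsocle S := by
    intro a m nn
    have hmem : a ∈ rsocle R := by rw [hR]; trivial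
    have hle : rsocle R ≤ AddSubgroup.comap
        (AddMonoidHom.mk' (fun a : R => ψ m (rn a nn))
          (fun x y => by
            show ψ m (rn (x + y) nn) = ψ m (rn x nn) + ψ m (rn y nn)
            rw [hrn_addl, hψ_addr])) (rsocle S) := by
      refine sSup_le ?_
      intro I hImin
      obtain ⟨e, he0, hee, hIe⟩ := brauer_idem hRsp hImin
      intro x hx
      refine AddSubgroup.mem_comap.mpr ?_
      rw [hIe] at hx
      obtain ⟨r, rfl⟩ := hx
      show ψ m (rn (r * e) nn) ∈ rsocle S
      rw [hrn_mul, ← hψ_bal]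
      refine key1 e hee (hIe ▸ hImin) (rn e nn) ?_ (mr m r)
      rw [← hrn_mul, hee]
    exact AddSubgroup.mem_comap.mp (hle hmem)
  have keyA : ∀ (m : M) (nn : N) (m' : M) (n' : N), ψ m nn * ψ m' n' ∈ rsocle S := by
    intro m nn m' n'
    have heq : ψ m nn * ψ m' n' = ψ m (rn (φ nn m') n') := by
      rw [← hψ_right, ← hassoc₁]
    rw [heq]
    exact keyB _ _ _
  have hprod : ∀ a b : S, a * b ∈ rsocle S := by
    have hgen : ∀ (m' : M) (n' : N) (a : S), a * ψ m' n' ∈ rsocle S := by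
      intro m' n' a
      have hle : AddSubgroup.closure (Set.range fun p : M × N => ψ p.1 p.2) ≤
          AddSubgroup.comap
            (AddMonoidHom.mk' (fun x : S => x * ψ m' n')
              (fun u v => add_mul u v _)) (rsocle S) := by
        refine (AddSubgroup.closure_le _).mpr ?_
        rintro _ ⟨⟨m, nn⟩, rfl⟩
        exact AddSubgroup.mem_comap.mpr (keyA m nn m' n')
      exact AddSubgroup.mem_comap.mp (hle (hψ_surj a))
    intro a b
    have hle : AddSubgroup.closure (Set.range fun p : M × N => ψ p.1 p.2) ≤
        AddSubgroup.comap (AddMonoidHom.mk' (fun x : S => a * x) (mul_add a)) (rsocle S) := by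
      refine (AddSubgroup.closure_le _).mpr ?_
      rintro _ ⟨⟨m', n'⟩, rfl⟩
      exact AddSubgroup.mem_comap.mpr (hgen m' n' a)
    exact AddSubgroup.mem_comap.mp (hle (hψ_surj b))
  refine (AddSubgroup.eq_top_iff' _).mpr fun z => ?_
  have hle : AddSubgroup.closure {y : S | ∃ a b : S, y = a * b} ≤ rsocle S := by
    refine (AddSubgroup.closure_le _).mpr ?_
    rintro _ ⟨a, b, rfl⟩
    exact hprod a b
  exact hle (hSid z)

end MoritaAux

/-- Let `R` and `S` be semiprime idempotent rings admitting a surjective Morita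
context `(R, S, N, M, φ, ψ)` (given by biadditive, balanced, associative pairings
`φ : N × M → R` and `ψ : M × N → S` whose images generate `R` and `S` as additive
groups).  Then `R` coincides with its socle if and only if `S` coincides with its socle. -/
theorem morita_context_socle_eq_top_iff
    {R S N M : Type} [NonUnitalRing R] [NonUnitalRing S]
    [AddCommGroup N] [AddCommGroup M]
    (hRid : IsIdempotentRing R) (hSid : IsIdempotentRing S)
    (hRsp : IsSemiprimeRing R) (hSsp : IsSemiprimeRing S)
    -- `N` is an `(R,S)`-bimodule
    (rn : R → N → N) (ns : N → S → N)
    (hrn_addl : ∀ (r₁ r₂ : R) (n : N), rn (r₁ + r₂) n = rn r₁ n + rn r₂ n)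
    (hrn_addr : ∀ (a : R) (n₁ n₂ : N), rn a (n₁ + n₂) = rn a n₁ + rn a n₂)
    (hrn_mul : ∀ (r₁ r₂ : R) (n : N), rn (r₁ * r₂) n = rn r₁ (rn r₂ n))
    (hns_addl : ∀ (n₁ n₂ : N) (t : S), ns (n₁ + n₂) t = ns n₁ t + ns n₂ t)
    (hns_addr : ∀ (n : N) (t₁ t₂ : S), ns n (t₁ + t₂) = ns n t₁ + ns n t₂)
    (hns_mul : ∀ (n : N) (t₁ t₂ : S), ns (ns n t₁) t₂ = ns n (t₁ * t₂))
    (hN_bimod : ∀ (a : R) (n : N) (t : S), ns (rn a n) t = rn a (ns n t))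
    -- `M` is an `(S,R)`-bimodule
    (sm : S → M → M) (mr : M → R → M)
    (hsm_addl : ∀ (t₁ t₂ : S) (m : M), sm (t₁ + t₂) m = sm t₁ m + sm t₂ m)
    (hsm_addr : ∀ (t : S) (m₁ m₂ : M), sm t (m₁ + m₂) = sm t m₁ + sm t m₂)
    (hsm_mul : ∀ (t₁ t₂ : S) (m : M), sm (t₁ * t₂) m = sm t₁ (sm t₂ m))
    (hmr_addl : ∀ (m₁ m₂ : M) (a : R), mr (m₁ + m₂) a = mr m₁ a + mr m₂ a)
    (hmr_addr : ∀ (m : M) (a₁ a₂ : R), mr m (a₁ + a₂) = mr m a₁ + mr m a₂)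
    (hmr_mul : ∀ (m : M) (a₁ a₂ : R), mr (mr m a₁) a₂ = mr m (a₁ * a₂))
    (hM_bimod : ∀ (t : S) (m : M) (a : R), mr (sm t m) a = sm t (mr m a))
    -- the pairings of the Morita context
    (φ : N → M → R) (ψ : M → N → S)
    (hφ_addl : ∀ (n₁ n₂ : N) (m : M), φ (n₁ + n₂) m = φ n₁ m + φ n₂ m)
    (hφ_addr : ∀ (n : N) (m₁ m₂ : M), φ n (m₁ + m₂) = φ n m₁ + φ n m₂)
    (hψ_addl : ∀ (m₁ m₂ : M) (n : N), ψ (m₁ + m₂) n = ψ m₁ n + ψ m₂ n)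
    (hψ_addr : ∀ (m : M) (n₁ n₂ : N), ψ m (n₁ + n₂) = ψ m n₁ + ψ m n₂)
    -- `φ` is `R`-bilinear and `S`-balanced, `ψ` is `S`-bilinear and `R`-balanced
    (hφ_left : ∀ (a : R) (n : N) (m : M), φ (rn a n) m = a * φ n m)
    (hφ_right : ∀ (n : N) (m : M) (a : R), φ n (mr m a) = φ n m * a)
    (hφ_bal : ∀ (n : N) (t : S) (m : M), φ (ns n t) m = φ n (sm t m))
    (hψ_left : ∀ (t : S) (m : M) (n : N), ψ (sm t m) n = t * ψ m n)
    (hψ_right : ∀ (m : M) (n : N) (t : S), ψ m (ns n t) = ψ m n * t)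
    (hψ_bal : ∀ (m : M) (a : R) (n : N), ψ (mr m a) n = ψ m (rn a n))
    -- the associativity conditions `(n,m)n' = n[m,n']` and `[m,n]m' = m(n,m')`
    (hassoc₁ : ∀ (n : N) (m : M) (n' : N), rn (φ n m) n' = ns n (ψ m n'))
    (hassoc₂ : ∀ (m : M) (n : N) (m' : M), sm (ψ m n) m' = mr m (φ n m'))
    -- surjectivity of the Morita context
    (hφ_surj : ∀ x : R, x ∈ AddSubgroup.closure (Set.range fun p : N × M => φ p.1 p.2))
    (hψ_surj : ∀ y : S, y ∈ AddSubgroup.closure (Set.range fun p : M × N => ψ p.1 p.2)) :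
    rsocle R = ⊤ ↔ rsocle S = ⊤ := by
  constructor
  · exact morita_socle_forward hRid hSid hRsp hSsp rn ns hrn_addl hrn_addr hrn_mul
      hns_addl hns_addr hns_mul hN_bimod sm mr hsm_addl hsm_addr hsm_mul
      hmr_addl hmr_addr hmr_mul hM_bimod φ ψ hφ_addl hφ_addr hψ_addl hψ_addr
      hφ_left hφ_right hφ_bal hψ_left hψ_right hψ_bal hassoc₁ hassoc₂ hφ_surj hψ_surj
  · exact morita_socle_forward hSid hRid hSsp hRsp sm mr hsm_addl hsm_addr hsm_mul
      hmr_addl hmr_addr hmr_mul hM_bimod rn ns hrn_addl hrn_addr hrn_mul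
      hns_addl hns_addr hns_mul hN_bimod ψ φ hψ_addl hψ_addr hφ_addl hφ_addr
      hψ_left hψ_right hψ_bal hφ_left hφ_right hφ_bal hassoc₂ hassoc₁ hψ_surj hφ_surj


end
end

section
/- Let R be a semiprime ring and x ∈ R. Then the socle of the local ring of R at x equals the local ring of the socle at x: soc(R_x) = x(soc(R))x (with the operations of R_x). In particular R_x is semiprime, so its socle is defined. -/
set_option synthInstance.maxHeartbeats 1000000
set_option maxHeartbeats 1000000

noncomputable section

section LocalRing
variable {R : Type} [NonUnitalRing R]

/-- The kernel of the additive map `a ↦ xax`. -/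
def localKer (x : R) : AddSubgroup R where
  carrier := {a | x * a * x = 0}
  add_mem' := by
    intro a b ha hb
    simp only [Set.mem_setOf_eq] at *
    rw [mul_add, add_mul, ha, hb, add_zero]
  zero_mem' := by simp
  neg_mem' := by
    intro a ha
    simp only [Set.mem_setOf_eq] at *
    rw [mul_neg, neg_mul, ha, neg_zero]

/-- The local ring `R_x` of `R` at `x`: the abelian group `xRx` (realized as the
quotient of `R` by the kernel of the additive map `a ↦ xax`), equipped with the
product `(xax)·(xbx) := xaxbx`. -/
def LocalAt (x : R) : Type := R ⧸ localKer x

instance (x : R) : AddCommGroup (LocalAt x) :=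
  inferInstanceAs (AddCommGroup (R ⧸ localKer x))

private theorem local_key (x a b c d : R) (h1 : x * a * x = x * c * x)
    (h2 : x * b * x = x * d * x) : x * (a * (x * b)) * x = x * (c * (x * d)) * x := by
  calc x * (a * (x * b)) * x = (x * a * x) * (b * x) := by noncomm_ring
    _ = (x * c * x) * (b * x) := by rw [h1]
    _ = (x * c) * (x * b * x) := by noncomm_ring
    _ = (x * c) * (x * d * x) := by rw [h2]
    _ = x * (c * (x * d)) * x := by noncomm_ring

/-- The product of the local ring at `x`. -/
def localMul (x : R) : LocalAt x → LocalAt x → LocalAt x :=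
  Quotient.map₂ (fun a b => a * (x * b)) (by
    intro a₁ a₂ ha b₁ b₂ hb
    have haM : -a₁ + a₂ ∈ localKer x := QuotientAddGroup.leftRel_apply.mp ha
    have hbM : -b₁ + b₂ ∈ localKer x := QuotientAddGroup.leftRel_apply.mp hb
    refine QuotientAddGroup.leftRel_apply.mpr ?_
    have ha' : x * a₁ * x = x * a₂ * x := by
      have h : x * (-a₁ + a₂) * x = 0 := haM
      rw [mul_add, add_mul, mul_neg, neg_mul] at h
      exact neg_add_eq_zero.mp h
    have hb' : x * b₁ * x = x * b₂ * x := by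
      have h : x * (-b₁ + b₂) * x = 0 := hbM
      rw [mul_add, add_mul, mul_neg, neg_mul] at h
      exact neg_add_eq_zero.mp h
    show x * (-(a₁ * (x * b₁)) + a₂ * (x * b₂)) * x = 0
    rw [mul_add, add_mul, mul_neg, neg_mul, local_key x a₁ b₁ a₂ b₂ ha' hb',
      neg_add_cancel])

instance (x : R) : NonUnitalRing (LocalAt x) :=
  { (inferInstance : AddCommGroup (LocalAt x)) with
    mul := localMul x
    left_distrib := fun a b c => Quotient.inductionOn₃ a b c fun a b c =>
      congrArg (Quot.mk _)
        (show a * (x * (b + c)) = a * (x * b) + a * (x * c) by rw [mul_add, mul_add])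
    right_distrib := fun a b c => Quotient.inductionOn₃ a b c fun a b c =>
      congrArg (Quot.mk _)
        (show (a + b) * (x * c) = a * (x * c) + b * (x * c) from add_mul _ _ _)
    zero_mul := fun a => Quotient.inductionOn a fun a =>
      congrArg (Quot.mk _) (show (0 : R) * (x * a) = 0 from zero_mul _)
    mul_zero := fun a => Quotient.inductionOn a fun a =>
      congrArg (Quot.mk _) (show a * (x * 0) = 0 by rw [mul_zero, mul_zero])
    mul_assoc := fun a b c => Quotient.inductionOn₃ a b c fun a b c =>
      congrArg (Quot.mk _)
        (show (a * (x * b)) * (x * c) = a * (x * (b * (x * c))) by noncomm_ring) }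

/-- The canonical injection of the local ring `R_x` into `R`, sending (the class of)
`a` to `xax`; its image is the subset `xRx` of `R`. -/
def localToRing (x : R) : LocalAt x →+ R :=
  QuotientAddGroup.lift (localKer x)
    (AddMonoidHom.mk' (fun a => x * a * x)
      (fun a b => show x * (a + b) * x = x * a * x + x * b * x by rw [mul_add, add_mul]))
    (fun a ha => ha)

end LocalRing

section Test
variable {R : Type} [NonUnitalRing R] (x : R)

/-- The quotient map `R → R_x`. -/
def lmk : R → LocalAt x := QuotientAddGroup.mk

theorem lmk_mul (a b : R) : lmk x a * lmk x b = lmk x (a * (x * b)) := rfl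

theorem toRing_lmk (a : R) : localToRing x (lmk x a) = x * a * x := rfl

theorem lmk_zero_iff (a : R) : lmk x a = 0 ↔ x * a * x = 0 :=
  QuotientAddGroup.eq_zero_iff a

theorem lmk_add (a b : R) : lmk x (a + b) = lmk x a + lmk x b := rfl

theorem lmk_surjective : Function.Surjective (lmk x) := QuotientAddGroup.mk_surjective

end Test
section Aux
variable {S : Type} [NonUnitalRing S]

theorem closure_mul_zero {A B : Set S} (h : ∀ a ∈ A, ∀ b ∈ B, a * b = 0) :
    ∀ z ∈ AddSubgroup.closure A, ∀ w ∈ AddSubgroup.closure B, z * w = 0 := by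
  intro z hz
  induction hz using AddSubgroup.closure_induction with
  | mem a ha =>
    intro w hw
    induction hw using AddSubgroup.closure_induction with
    | mem b hb => exact h a ha b hb
    | zero => exact mul_zero a
    | add b c _ _ ihb ihc => rw [mul_add, ihb, ihc, add_zero]
    | neg b _ ihb => rw [mul_neg, ihb, neg_zero]
  | zero => intro w hw; exact zero_mul w
  | add z₁ z₂ _ _ ih1 ih2 => intro w hw; rw [add_mul, ih1 w hw, ih2 w hw, add_zero]
  | neg z₁ _ ih => intro w hw; rw [neg_mul, ih w hw, neg_zero]

theorem twoSided_closure {A : Set S}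
    (h : ∀ c : S, ∀ g ∈ A, c * g ∈ AddSubgroup.closure A ∧ g * c ∈ AddSubgroup.closure A) :
    IsTwoSidedIdealSG (AddSubgroup.closure A) := by
  intro c z hz
  induction hz using AddSubgroup.closure_induction with
  | mem a ha => exact h c a ha
  | zero => exact ⟨by rw [mul_zero]; exact zero_mem _, by rw [zero_mul]; exact zero_mem _⟩
  | add z₁ z₂ _ _ ih1 ih2 =>
    exact ⟨by rw [mul_add]; exact add_mem ih1.1 ih2.1, by rw [add_mul]; exact add_mem ih1.2 ih2.2⟩
  | neg z₁ _ ih =>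
    exact ⟨by rw [mul_neg]; exact neg_mem ih.1, by rw [neg_mul]; exact neg_mem ih.2⟩

theorem RaR_zero (hS : IsSemiprimeRing S) (a : S) (h2 : ∀ r : S, a * r * a = 0) :
    ∀ r s : S, r * a * s = 0 := by
  set A : Set S := {y | ∃ r s : S, y = r * a * s} with hA
  have hts : IsTwoSidedIdealSG (AddSubgroup.closure A) := by
    apply twoSided_closure
    rintro c _ ⟨r, s, rfl⟩
    constructor
    · exact AddSubgroup.subset_closure ⟨c * r, s, by noncomm_ring⟩
    · exact AddSubgroup.subset_closure ⟨r, s * c, by noncomm_ring⟩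
  have hsq : ∀ z ∈ AddSubgroup.closure A, ∀ w ∈ AddSubgroup.closure A, z * w = 0 := by
    apply closure_mul_zero
    rintro _ ⟨r, s, rfl⟩ _ ⟨r', s', rfl⟩
    have h0 : a * (s * r') * a = 0 := h2 _
    calc r * a * s * (r' * a * s') = r * (a * (s * r') * a) * s' := by noncomm_ring
      _ = 0 := by rw [h0]; simp
  have hbot := hS _ hts hsq
  intro r s
  have : r * a * s ∈ AddSubgroup.closure A := AddSubgroup.subset_closure ⟨r, s, rfl⟩
  rw [hbot] at this
  exact this

theorem key_elem (hS : IsSemiprimeRing S) (c : S)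
    (h1 : ∀ r s : S, r * c * s = 0) (h2 : ∀ r : S, c * r * c = 0) (h3 : c * c = 0) :
    c = 0 := by
  set A : Set S := {y | y = c ∨ (∃ r : S, y = r * c) ∨ ∃ s : S, y = c * s} with hA
  have hts : IsTwoSidedIdealSG (AddSubgroup.closure A) := by
    apply twoSided_closure
    rintro d g (hg | ⟨r, rfl⟩ | ⟨s, rfl⟩)
    · rw [hg]
      exact ⟨AddSubgroup.subset_closure (Or.inr (Or.inl ⟨d, rfl⟩)),
        AddSubgroup.subset_closure (Or.inr (Or.inr ⟨d, rfl⟩))⟩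
    · constructor
      · exact AddSubgroup.subset_closure (Or.inr (Or.inl ⟨d * r, by noncomm_ring⟩))
      · rw [show r * c * d = 0 from h1 r d]; exact zero_mem _
    · constructor
      · rw [show d * (c * s) = d * c * s by noncomm_ring, h1]; exact zero_mem _
      · exact AddSubgroup.subset_closure (Or.inr (Or.inr ⟨s * d, by noncomm_ring⟩))
  have hsq : ∀ z ∈ AddSubgroup.closure A, ∀ w ∈ AddSubgroup.closure A, z * w = 0 := by
    apply closure_mul_zero
    rintro g hg g' hg'
    rcases hg with hg | ⟨r, rfl⟩ | ⟨s, rfl⟩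
    · rcases hg' with hg' | ⟨r', rfl⟩ | ⟨s', rfl⟩
      · rw [hg, hg']; exact h3
      · rw [hg]
        calc c * (r' * c) = c * r' * c := by noncomm_ring
          _ = 0 := h2 r'
      · rw [hg]
        calc c * (c * s') = c * c * s' := by noncomm_ring
          _ = 0 := by rw [h3]; simp
    · rcases hg' with hg' | ⟨r', rfl⟩ | ⟨s', rfl⟩
      · rw [hg']
        calc r * c * c = r * (c * c) := by noncomm_ring
          _ = 0 := by rw [h3]; simp
      · calc r * c * (r' * c) = r * (c * r' * c) := by noncomm_ring
          _ = 0 := by rw [h2]; simp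
      · calc r * c * (c * s') = r * (c * c) * s' := by noncomm_ring
          _ = 0 := by rw [h3]; simp
    · rcases hg' with hg' | ⟨r', rfl⟩ | ⟨s', rfl⟩
      · rw [hg']; exact h2 s
      · calc c * s * (r' * c) = c * (s * r') * c := by noncomm_ring
          _ = 0 := h2 _
      · calc c * s * (c * s') = (c * s * c) * s' := by noncomm_ring
          _ = 0 := by rw [h2]; simp
  have hbot := hS _ hts hsq
  have : c ∈ AddSubgroup.closure A := AddSubgroup.subset_closure (Or.inl rfl)
  rw [hbot] at this
  exact this

theorem semiprime_aRa (hS : IsSemiprimeRing S) {a : S} (h : ∀ r : S, a * r * a = 0) :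
    a = 0 := by
  have h1 := RaR_zero hS a h
  have h1' : ∀ r s : S, r * (a * a) * s = 0 := fun r s => by
    calc r * (a * a) * s = r * a * (a * s) := by noncomm_ring
      _ = 0 := h1 r (a * s)
  have h2' : ∀ r : S, (a * a) * r * (a * a) = 0 := fun r => by
    calc (a * a) * r * (a * a) = (a * a * r) * a * a := by noncomm_ring
      _ = 0 := by rw [h1]
  have h3' : (a * a) * (a * a) = 0 := by
    calc (a * a) * (a * a) = a * (a * a) * a := by noncomm_ring
      _ = 0 := h (a * a)
  have ha2 : a * a = 0 := key_elem hS _ h1' h2' h3'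
  exact key_elem hS a h1 h ha2

end Aux
section Aux2
variable {S : Type} [NonUnitalRing S]

theorem minimal_principalLeft (hS : IsSemiprimeRing S) {L : AddSubgroup S}
    (hL : IsMinimalLeftIdeal L) {c : S} (hc : c ∈ L) (hc0 : c ≠ 0) :
    principalLeft c = L := by
  have hPle : principalLeft c ≤ L := by rintro _ ⟨r, rfl⟩; exact hL.1 r c hc
  have hP : IsLeftIdeal (principalLeft c) := fun a y hy => principalLeft.mul_mem c a hy
  rcases lt_or_eq_of_le hPle with h | h
  · exfalso
    have hbot := hL.2.2 _ hP h
    apply hc0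
    apply semiprime_aRa hS
    intro r
    have hrc : r * c ∈ principalLeft c := ⟨r, rfl⟩
    rw [hbot, AddSubgroup.mem_bot] at hrc
    calc c * r * c = c * (r * c) := by noncomm_ring
      _ = 0 := by rw [hrc, mul_zero]
  · exact h

theorem exists_ne_zero {J : AddSubgroup S} (h : J ≠ ⊥) : ∃ z ∈ J, z ≠ 0 := by
  by_contra hc
  push_neg at hc
  exact h ((AddSubgroup.eq_bot_iff_forall J).2 hc)

/-- nonzero elements of semiprime rings have nonzero `z s z`. -/
theorem exists_sandwich (hS : IsSemiprimeRing S) {z : S} (hz : z ≠ 0) :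
    ∃ s : S, z * s * z ≠ 0 := by
  by_contra h
  push_neg at h
  exact hz (semiprime_aRa hS h)

theorem rsocle_induction {P : S → Prop} {a : S} (ha : a ∈ rsocle S)
    (mem : ∀ L : AddSubgroup S, IsMinimalLeftIdeal L → ∀ b ∈ L, P b)
    (zero : P 0) (add : ∀ b c : S, P b → P c → P (b + c)) : P a := by
  rw [rsocle, sSup_eq_iSup'] at ha
  exact AddSubgroup.iSup_induction (C := P) _ ha (fun I b hb => mem I I.2 b hb) zero add

theorem mem_rsocle_of_minimal {L : AddSubgroup S} (hL : IsMinimalLeftIdeal L)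
    {b : S} (hb : b ∈ L) : b ∈ rsocle S :=
  le_sSup (show L ∈ {I : AddSubgroup S | IsMinimalLeftIdeal I} from hL) hb

theorem rsocle_mul_left {a : S} (ha : a ∈ rsocle S) (r : S) : r * a ∈ rsocle S := by
  refine rsocle_induction (P := fun b => r * b ∈ rsocle S) ha (fun L hL b hb => ?_) ?_ (fun b c hb hc => ?_)
  · exact mem_rsocle_of_minimal hL (hL.1 r b hb)
  · show r * 0 ∈ rsocle S; rw [mul_zero]; exact zero_mem _
  · show r * (b + c) ∈ rsocle S; rw [mul_add]; exact add_mem hb hc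

theorem rsocle_mul_right (hS : IsSemiprimeRing S) {a : S} (ha : a ∈ rsocle S) (r : S) :
    a * r ∈ rsocle S := by
  refine rsocle_induction (P := fun b => b * r ∈ rsocle S) ha (fun L hL b hb => ?_) ?_ (fun b c hb hc => ?_)
  · -- b * r ∈ rsocle
    set M : AddSubgroup S := AddSubgroup.map (AddMonoidHom.mulRight r) L with hM
    have hMmem : ∀ w : S, w ∈ M ↔ ∃ c ∈ L, c * r = w := by
      intro w; simp [hM, AddSubgroup.mem_map, AddMonoidHom.mulRight]
    have hbM : b * r ∈ M := (hMmem _).2 ⟨b, hb, rfl⟩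
    have hMleft : IsLeftIdeal M := by
      intro d w hw
      obtain ⟨c, hcL, rfl⟩ := (hMmem w).1 hw
      exact (hMmem _).2 ⟨d * c, hL.1 d c hcL, by noncomm_ring⟩
    by_cases hMbot : M = ⊥
    · rw [hMbot, AddSubgroup.mem_bot] at hbM
      rw [hbM]; exact zero_mem _
    · refine mem_rsocle_of_minimal ⟨hMleft, hMbot, ?_⟩ hbM
      intro J hJ hJM
      by_contra hJbot
      obtain ⟨z, hzJ, hz0⟩ := exists_ne_zero hJbot
      obtain ⟨c, hcL, rfl⟩ := (hMmem z).1 (le_of_lt hJM hzJ)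
      have hc0 : c ≠ 0 := by rintro rfl; rw [zero_mul] at hz0; exact hz0 rfl
      have hpc := minimal_principalLeft hS hL hcL hc0
      have hMle : M ≤ J := by
        intro w hw
        obtain ⟨c', hc'L, rfl⟩ := (hMmem w).1 hw
        rw [← hpc] at hc'L
        obtain ⟨s, rfl⟩ := hc'L
        have : s * c * r = s * (c * r) := by noncomm_ring
        rw [this]
        exact hJ s _ hzJ
      exact hJM.not_ge hMle
  · show (0 : S) * r ∈ rsocle S; rw [zero_mul]; exact zero_mem _
  · show (b + c) * r ∈ rsocle S; rw [add_mul]; exact add_mem hb hc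

end Aux2
section Loc
variable {R : Type} [NonUnitalRing R] (x : R)

theorem loc_semiprime (hR : IsSemiprimeRing R) : IsSemiprimeRing (LocalAt x) := by
  intro I hI hsq
  rw [AddSubgroup.eq_bot_iff_forall]
  intro u hu
  obtain ⟨a, rfl⟩ := lmk_surjective x u
  rw [lmk_zero_iff]
  apply semiprime_aRa hR
  intro r
  have h1 : lmk x a * (lmk x r * lmk x a) = 0 := hsq _ hu _ ((hI (lmk x r) _ hu).1)
  rw [lmk_mul, lmk_mul, lmk_zero_iff] at h1
  calc x * a * x * r * (x * a * x) = x * (a * (x * (r * (x * a)))) * x := by noncomm_ring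
    _ = 0 := h1

theorem lmk_mem_socle (hR : IsSemiprimeRing R) {L : AddSubgroup R}
    (hL : IsMinimalLeftIdeal L) {a : R} (ha : a ∈ L) :
    lmk x a ∈ rsocle (LocalAt x) := by
  set M : AddSubgroup (LocalAt x) := AddSubgroup.map (QuotientAddGroup.mk' (localKer x)) L
    with hM
  have hMmem : ∀ w : LocalAt x, w ∈ M ↔ ∃ b ∈ L, lmk x b = w := by
    intro w; rw [hM]; exact Iff.rfl
  have hMleft : IsLeftIdeal M := by
    intro β w hw
    obtain ⟨b, hb, rfl⟩ := (hMmem w).1 hw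
    obtain ⟨c, rfl⟩ := lmk_surjective x β
    rw [lmk_mul]
    exact (hMmem _).2 ⟨c * (x * b), hL.1 c _ (hL.1 x b hb), rfl⟩
  by_cases hMbot : M = ⊥
  · have h0 : lmk x a ∈ M := (hMmem _).2 ⟨a, ha, rfl⟩
    rw [hMbot, AddSubgroup.mem_bot] at h0
    rw [h0]; exact zero_mem _
  · refine mem_rsocle_of_minimal ⟨hMleft, hMbot, ?_⟩ ((hMmem _).2 ⟨a, ha, rfl⟩)
    intro J hJ hJM
    by_contra hJbot
    obtain ⟨z, hzJ, hz0⟩ := exists_ne_zero hJbot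
    obtain ⟨b, hb, rfl⟩ := (hMmem z).1 (le_of_lt hJM hzJ)
    have hxb0 : x * b ≠ 0 := by
      intro h
      apply hz0
      rw [lmk_zero_iff]
      calc x * b * x = (x * b) * x := rfl
        _ = 0 := by rw [h, zero_mul]
    have hxbL : x * b ∈ L := hL.1 x b hb
    have hpc := minimal_principalLeft hR hL hxbL hxb0
    have hMle : M ≤ J := by
      intro w hw
      obtain ⟨b', hb', rfl⟩ := (hMmem w).1 hw
      rw [← hpc] at hb'
      obtain ⟨s, hs⟩ := hb'
      have hs' : s * (x * b) = b' := hs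
      rw [← hs', ← lmk_mul]
      exact hJ (lmk x s) _ hzJ
    exact hJM.not_ge hMle

theorem socle_image (hR : IsSemiprimeRing R)
    (hRx : IsSemiprimeRing (LocalAt x)) {M : AddSubgroup (LocalAt x)}
    (hM : IsMinimalLeftIdeal M) {u : LocalAt x} (hu : u ∈ M) :
    ∃ c ∈ rsocle R, localToRing x u = x * c * x := by
  obtain ⟨a, rfl⟩ := lmk_surjective x u
  rw [toRing_lmk]
  by_cases hp : x * a * x = 0
  · exact ⟨0, zero_mem _, by rw [hp, mul_zero, zero_mul]⟩
  have hu0 : lmk x a ≠ 0 := fun h => hp ((lmk_zero_iff x a).1 h)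
  obtain ⟨σ, hσ⟩ := exists_sandwich hRx hu0
  obtain ⟨s, rfl⟩ := lmk_surjective x σ
  have hveq : lmk x a * lmk x s * lmk x a = lmk x (a * (x * s) * (x * a)) := by
    rw [lmk_mul, lmk_mul]
  have hvM : lmk x (a * (x * s) * (x * a)) ∈ M := by
    rw [← hveq]; exact hM.1 _ _ hu
  have hv0 : lmk x (a * (x * s) * (x * a)) ≠ 0 := by rw [← hveq]; exact hσ
  have hpv := minimal_principalLeft hRx hM hvM hv0
  have huP : lmk x a ∈ principalLeft (lmk x (a * (x * s) * (x * a))) := by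
    rw [hpv]; exact hu
  obtain ⟨β, hβ0⟩ := huP
  obtain ⟨t, rfl⟩ := lmk_surjective x β
  have hβ : lmk x t * lmk x (a * (x * s) * (x * a)) = lmk x a := hβ0
  rw [lmk_mul] at hβ
  have hkey : x * (t * (x * (a * (x * s) * (x * a)))) * x = x * a * x := by
    have := congrArg (localToRing x) hβ
    rw [toRing_lmk, toRing_lmk] at this
    exact this
  -- N := principalLeft (x * a * x) is a minimal left ideal of R containing x*a*x
  have hxaxN : x * a * x ∈ principalLeft (x * a * x) := by
    refine ⟨x * t * (x * a * x) * s, ?_⟩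
    show x * t * (x * a * x) * s * (x * a * x) = x * a * x
    calc x * t * (x * a * x) * s * (x * a * x)
        = x * (t * (x * (a * (x * s) * (x * a)))) * x := by noncomm_ring
      _ = x * a * x := hkey
  have hNbot : principalLeft (x * a * x) ≠ ⊥ := by
    intro hbot
    apply hp
    apply semiprime_aRa hR
    intro r
    have : (x * a * x * r) * (x * a * x) ∈ principalLeft (x * a * x) := ⟨_, rfl⟩
    rw [hbot, AddSubgroup.mem_bot] at this
    exact this
  have hNmin : IsMinimalLeftIdeal (principalLeft (x * a * x)) := by
    refine ⟨fun r y hy => principalLeft.mul_mem _ r hy, hNbot, ?_⟩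
    intro J hJ hJN
    by_contra hJbot
    obtain ⟨z, hzJ, hz0⟩ := exists_ne_zero hJbot
    obtain ⟨r0, hr00⟩ := le_of_lt hJN hzJ
    have hr0 : r0 * (x * a * x) = z := hr00
    obtain ⟨s2, hs2⟩ := exists_sandwich hR hz0
    -- v2 := [a (x (s2 r0)) (x a)] ∈ M, nonzero
    have hveq2 : lmk x a * lmk x (s2 * r0) * lmk x a =
        lmk x (a * (x * (s2 * r0)) * (x * a)) := by rw [lmk_mul, lmk_mul]
    have hv2M : lmk x (a * (x * (s2 * r0)) * (x * a)) ∈ M := by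
      rw [← hveq2]; exact hM.1 _ _ hu
    have hv20 : lmk x (a * (x * (s2 * r0)) * (x * a)) ≠ 0 := by
      rw [Ne, lmk_zero_iff]
      intro h0
      apply hs2
      rw [← hr0]
      calc r0 * (x * a * x) * s2 * (r0 * (x * a * x)) =
          r0 * (x * (a * (x * (s2 * r0)) * (x * a)) * x) := by noncomm_ring
        _ = 0 := by rw [h0, mul_zero]
    have hpv2 := minimal_principalLeft hRx hM hv2M hv20
    have huP2 : lmk x a ∈ principalLeft (lmk x (a * (x * (s2 * r0)) * (x * a))) := by
      rw [hpv2]; exact hu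
    obtain ⟨β2, hβ20⟩ := huP2
    obtain ⟨t2, rfl⟩ := lmk_surjective x β2
    have hβ2 : lmk x t2 * lmk x (a * (x * (s2 * r0)) * (x * a)) = lmk x a := hβ20
    rw [lmk_mul] at hβ2
    have hkey2 : x * (t2 * (x * (a * (x * (s2 * r0)) * (x * a)))) * x = x * a * x := by
      have := congrArg (localToRing x) hβ2
      rw [toRing_lmk, toRing_lmk] at this
      exact this
    have hxaxJ : x * a * x ∈ J := by
      have heq : (x * t2 * (x * a * x) * s2) * z = x * a * x := by
        rw [← hr0]
        calc x * t2 * (x * a * x) * s2 * (r0 * (x * a * x))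
            = x * (t2 * (x * (a * (x * (s2 * r0)) * (x * a)))) * x := by noncomm_ring
          _ = x * a * x := hkey2
      have hmem : (x * t2 * (x * a * x) * s2) * z ∈ J := hJ _ _ hzJ
      rwa [heq] at hmem
    have hNle : principalLeft (x * a * x) ≤ J := by
      rintro w ⟨y, rfl⟩
      exact hJ y _ hxaxJ
    exact hJN.not_ge hNle
  have hxaxsoc : x * a * x ∈ rsocle R := mem_rsocle_of_minimal hNmin hxaxN
  refine ⟨t * (x * (a * (x * s) * (x * a))), ?_, hkey.symm⟩
  have hcform : t * (x * (a * (x * s) * (x * a))) = t * ((x * a * x) * (s * (x * a))) := by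
    noncomm_ring
  rw [hcform]
  exact rsocle_mul_left (rsocle_mul_right hR hxaxsoc _) t

end Loc

/-- For a semiprime ring `R` and `x ∈ R`, the local ring `R_x` of `R` at `x` is
semiprime, and its socle equals `x · soc(R) · x`: under the canonical injection
`R_x → R`, the image of `soc(R_x)` is `{xax : a ∈ soc(R)}`. -/
theorem socle_localAt
    {R : Type} [NonUnitalRing R] (hR : IsSemiprimeRing R) (x : R) :
    IsSemiprimeRing (LocalAt x) ∧
    (localToRing x) '' ((rsocle (LocalAt x) : AddSubgroup (LocalAt x)) : Set (LocalAt x)) =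
      {y : R | ∃ a ∈ rsocle R, y = x * a * x} := by
  have hRx := loc_semiprime x hR
  refine ⟨hRx, ?_⟩
  ext y
  constructor
  · rintro ⟨u, hu, rfl⟩
    refine rsocle_induction
      (P := fun u : LocalAt x => ∃ c ∈ rsocle R, localToRing x u = x * c * x) hu
      (fun M hM v hv => socle_image x hR hRx hM hv)
      ⟨0, zero_mem _, by rw [map_zero, mul_zero, zero_mul]⟩ ?_
    rintro u v ⟨c, hc, hcu⟩ ⟨d, hd, hdv⟩
    exact ⟨c + d, add_mem hc hd, by rw [map_add, hcu, hdv]; noncomm_ring⟩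
  · rintro ⟨a, ha, rfl⟩
    refine ⟨lmk x a, ?_, rfl⟩
    refine rsocle_induction (P := fun a : R => lmk x a ∈ rsocle (LocalAt x)) ha
      (fun L hL b hb => lmk_mem_socle x hR hL hb) ?_ ?_
    · show lmk x (0 : R) ∈ rsocle (LocalAt x)
      rw [show lmk x (0 : R) = 0 from rfl]
      exact zero_mem _
    · intro b c hb hc
      show lmk x (b + c) ∈ rsocle (LocalAt x)
      rw [show lmk x (b + c) = lmk x b + lmk x c from rfl]
      exact add_mem hb hc

end
end

section
/- Let E be an arbitrary (countable) graph, K a field, and u ∈ E^0 a vertex such that there exists a closed path based at u (a path μ with s(μ) = r(μ) = u of positive length). Then the principal left ideal L_K(E)u is not a minimal left ideal. -/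
set_option synthInstance.maxHeartbeats 1000000
set_option maxHeartbeats 1000000

noncomputable section

/-! ## Generators and relations for the Leavitt path algebra of a graph

A (directed) graph is given by types `V` (vertices, `E^0`) and `Ed` (edges, `E^1`),
both countable, together with source and range maps `s r : Ed → V`. -/

/-- Generators for the Leavitt path algebra: vertices, real edges and ghost edges. -/
inductive LPAGen (V Ed : Type) : Type where
  | vert : V → LPAGen V Ed
  | edge : Ed → LPAGen V Ed
  | ghost : Ed → LPAGen V Ed

open Classical in
/-- The defining relations of the Leavitt path algebra: the vertices are pairwise
orthogonal idempotents, (1) `s(e)e = e = e r(e)`, (2) `r(e)e* = e* = e* s(e)`,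
(3) `e* e' = δ_{e,e'} r(e)`, and (4) `v = ∑_{s(e) = v} e e*` for every regular vertex `v`. -/
inductive LPARel (K : Type) [Field K] {V Ed : Type} (s r : Ed → V) :
    FreeAlgebra K (LPAGen V Ed) → FreeAlgebra K (LPAGen V Ed) → Prop where
  | vert_mul (u v : V) : LPARel K s r
      (FreeAlgebra.ι K (LPAGen.vert u) * FreeAlgebra.ι K (LPAGen.vert v))
      (if u = v then FreeAlgebra.ι K (LPAGen.vert u) else 0)
  | src_mul_edge (e : Ed) : LPARel K s r
      (FreeAlgebra.ι K (LPAGen.vert (s e)) * FreeAlgebra.ι K (LPAGen.edge e))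
      (FreeAlgebra.ι K (LPAGen.edge e))
  | edge_mul_rng (e : Ed) : LPARel K s r
      (FreeAlgebra.ι K (LPAGen.edge e) * FreeAlgebra.ι K (LPAGen.vert (r e)))
      (FreeAlgebra.ι K (LPAGen.edge e))
  | rng_mul_ghost (e : Ed) : LPARel K s r
      (FreeAlgebra.ι K (LPAGen.vert (r e)) * FreeAlgebra.ι K (LPAGen.ghost e))
      (FreeAlgebra.ι K (LPAGen.ghost e))
  | ghost_mul_src (e : Ed) : LPARel K s r
      (FreeAlgebra.ι K (LPAGen.ghost e) * FreeAlgebra.ι K (LPAGen.vert (s e)))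
      (FreeAlgebra.ι K (LPAGen.ghost e))
  | ghost_mul_edge (e f : Ed) : LPARel K s r
      (FreeAlgebra.ι K (LPAGen.ghost e) * FreeAlgebra.ι K (LPAGen.edge f))
      (if e = f then FreeAlgebra.ι K (LPAGen.vert (r e)) else 0)
  | ck2 (v : V) (h : {e : Ed | s e = v}.Finite) (hne : {e : Ed | s e = v}.Nonempty) :
      LPARel K s r
        (∑ e ∈ h.toFinset,
          FreeAlgebra.ι K (LPAGen.edge e) * FreeAlgebra.ι K (LPAGen.ghost e))
        (FreeAlgebra.ι K (LPAGen.vert v))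

variable (K : Type) [Field K] {V Ed : Type} (s r : Ed → V)

/-- The ambient unital algebra: quotient of the free associative algebra on the
generators by the ideal induced by the Leavitt path algebra relations. -/
abbrev LPAamb : Type := RingQuot (LPARel K s r)

/-- The canonical image of a generator in the ambient algebra. -/
def lpaGen (g : LPAGen V Ed) : LPAamb K s r :=
  RingQuot.mkAlgHom K (LPARel K s r) (FreeAlgebra.ι K g)

/-- The Leavitt path algebra `L_K(E)` of the graph `E = (V, Ed, s, r)`: the (in general
non-unital) subalgebra of the ambient quotient algebra generated by the vertices,
edges and ghost edges. -/
def LeavittPathAlgebra : NonUnitalSubalgebra K (LPAamb K s r) :=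
  NonUnitalAlgebra.adjoin K (Set.range (lpaGen K s r))

namespace LPA

/-- A vertex, as an element of the Leavitt path algebra. -/
def vertex (v : V) : LeavittPathAlgebra K s r :=
  ⟨lpaGen K s r (LPAGen.vert v), NonUnitalAlgebra.subset_adjoin K ⟨_, rfl⟩⟩

/-- A (real) edge, as an element of the Leavitt path algebra. -/
def edge (e : Ed) : LeavittPathAlgebra K s r :=
  ⟨lpaGen K s r (LPAGen.edge e), NonUnitalAlgebra.subset_adjoin K ⟨_, rfl⟩⟩

/-- A ghost edge `e*`, as an element of the Leavitt path algebra. -/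
def ghost (e : Ed) : LeavittPathAlgebra K s r :=
  ⟨lpaGen K s r (LPAGen.ghost e), NonUnitalAlgebra.subset_adjoin K ⟨_, rfl⟩⟩

/-- The set of elements of the Leavitt path algebra of the form `v`, `e` or `e*`
(i.e. the set `E^0 ∪ E^1 ∪ (E^1)^*`). -/
def genSet : Set (LeavittPathAlgebra K s r) :=
  {x | ∃ g : LPAGen V Ed, (x : LPAamb K s r) = lpaGen K s r g}

end LPA

/-! ## Graph-theoretic notions -/

section GraphNotions

/-- `Reaches s r u w` : there is a (possibly trivial) path from `u` to `w`,
that is, `w ∈ T(u)`, the tree of `u`. -/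
def Reaches (u w : V) : Prop :=
  Relation.ReflTransGen (fun a b => ∃ e : Ed, s e = a ∧ r e = b) u w

/-- A vertex `v` is a bifurcation if it emits at least two distinct edges. -/
def IsBifurcation (v : V) : Prop := ∃ e f : Ed, e ≠ f ∧ s e = v ∧ s f = v

/-- `v` is a regular vertex: neither a sink nor an infinite emitter. -/
def IsRegularVertex (v : V) : Prop :=
  {e : Ed | s e = v}.Finite ∧ {e : Ed | s e = v}.Nonempty

/-- A nonempty list of edges is a closed path based at `v` if consecutive edges are
composable, its source is `v` and its range is `v`. -/
structure IsClosedPath (es : List Ed) (v : V) : Prop where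
  ne : es ≠ []
  chain : es.Chain' fun e f => r e = s f
  src : s (es.head ne) = v
  rng : r (es.getLast ne) = v

/-- A cycle based at `v` : a closed path based at `v` whose edges have pairwise
distinct sources. -/
structure IsCycle (es : List Ed) (v : V) extends IsClosedPath s r es v : Prop where
  nodup : (es.map s).Nodup

/-- A path (list of edges) has an exit if some edge `g` shares its source with some
edge of the path but is distinct from it. -/
def HasExit (es : List Ed) : Prop := ∃ g : Ed, ∃ e ∈ es, s g = s e ∧ g ≠ e

/-- Condition (L): every cycle has an exit. -/
def ConditionL : Prop := ∀ (es : List Ed) (v : V), IsCycle s r es v → HasExit s es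

/-- A line point: no vertex of the tree `T(u)` is a bifurcation or the base of a cycle. -/
def IsLinePoint (u : V) : Prop :=
  ∀ w : V, Reaches s r u w →
    ¬ IsBifurcation s w ∧ ∀ es : List Ed, ¬ IsCycle s r es w

/-- A set `H` of vertices is hereditary if it is closed under ranges of paths. -/
def IsHereditary (H : Set V) : Prop := ∀ v ∈ H, ∀ w : V, Reaches s r v w → w ∈ H

/-- A set `H` of vertices is saturated if every regular vertex all of whose emitted
edges have range in `H` belongs to `H`. -/
def IsSaturated (H : Set V) : Prop :=
  ∀ v : V, IsRegularVertex s v → (∀ e : Ed, s e = v → r e ∈ H) → v ∈ H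

end GraphNotions

namespace CPNM

variable (K : Type) [Field K] {V Ed : Type} (s r : Ed → V)

lemma gen_rel {a b : FreeAlgebra K (LPAGen V Ed)} (h : LPARel K s r a b) :
    RingQuot.mkAlgHom K (LPARel K s r) a = RingQuot.mkAlgHom K (LPARel K s r) b :=
  RingQuot.mkAlgHom_rel K h

open Classical in
lemma vv (v w : V) : lpaGen K s r (.vert v) * lpaGen K s r (.vert w)
    = if v = w then lpaGen K s r (.vert v) else 0 := by
  simpa only [lpaGen, map_mul, apply_ite (RingQuot.mkAlgHom K (LPARel K s r)), map_zero]
    using gen_rel K s r (LPARel.vert_mul v w)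

lemma vuu (v : V) : lpaGen K s r (.vert v) * lpaGen K s r (.vert v) = lpaGen K s r (.vert v) := by
  simpa using vv K s r v v

lemma se (e : Ed) :
    lpaGen K s r (.vert (s e)) * lpaGen K s r (.edge e) = lpaGen K s r (.edge e) := by
  simpa only [lpaGen, map_mul] using gen_rel K s r (LPARel.src_mul_edge e)

lemma er (e : Ed) :
    lpaGen K s r (.edge e) * lpaGen K s r (.vert (r e)) = lpaGen K s r (.edge e) := by
  simpa only [lpaGen, map_mul] using gen_rel K s r (LPARel.edge_mul_rng e)

open Classical in
lemma gmul (e f : Ed) : lpaGen K s r (.ghost e) * lpaGen K s r (.edge f)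
    = if e = f then lpaGen K s r (.vert (r e)) else 0 := by
  simpa only [lpaGen, map_mul, apply_ite (RingQuot.mkAlgHom K (LPARel K s r)), map_zero]
    using gen_rel K s r (LPARel.ghost_mul_edge e f)

lemma ge (e : Ed) :
    lpaGen K s r (.ghost e) * lpaGen K s r (.edge e) = lpaGen K s r (.vert (r e)) := by
  simpa using gmul K s r e e

/-- The element of the ambient algebra corresponding to a path (product of real edges). -/
def pe (es : List Ed) : LPAamb K s r := (es.map fun e => lpaGen K s r (.edge e)).prod

/-- The element of the ambient algebra corresponding to the ghost of a path. -/
def pg (es : List Ed) : LPAamb K s r := (es.reverse.map fun e => lpaGen K s r (.ghost e)).prod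

lemma pe_nil : pe K s r [] = 1 := rfl

lemma pe_cons (e : Ed) (t : List Ed) :
    pe K s r (e :: t) = lpaGen K s r (.edge e) * pe K s r t := by
  simp [pe]

lemma pg_cons (e : Ed) (t : List Ed) :
    pg K s r (e :: t) = pg K s r t * lpaGen K s r (.ghost e) := by
  simp [pg]

lemma vert_mul_pe (e : Ed) (t : List Ed) :
    lpaGen K s r (.vert (s e)) * pe K s r (e :: t) = pe K s r (e :: t) := by
  rw [pe_cons, ← mul_assoc, se]

lemma pe_mul_vert : ∀ (es : List Ed) (hne : es ≠ []),
    pe K s r es * lpaGen K s r (.vert (r (es.getLast hne))) = pe K s r es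
  | [e], _ => by
    rw [pe_cons, pe_nil, List.getLast_singleton, mul_one, er]
  | (e :: f :: t), _ => by
    rw [pe_cons, List.getLast_cons (by simp : f :: t ≠ []), mul_assoc,
      pe_mul_vert (f :: t) (by simp)]

lemma pg_mul_pe : ∀ (es : List Ed) (hne : es ≠ []),
    es.Chain' (fun a b => r a = s b) →
    pg K s r es * pe K s r es = lpaGen K s r (.vert (r (es.getLast hne)))
  | [e], _, _ => by
    rw [pg_cons, pe_cons, pe_nil, List.getLast_singleton, mul_one]
    show (1 : LPAamb K s r) * _ * _ = _
    rw [one_mul, ge]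
  | (e :: f :: t), _, hch => by
    obtain ⟨hre, hch'⟩ := List.isChain_cons_cons.mp hch
    rw [pg_cons, pe_cons, List.getLast_cons (by simp : f :: t ≠ []),
      mul_assoc, ← mul_assoc (lpaGen K s r (.ghost e)), ge, hre, vert_mul_pe,
      pg_mul_pe (f :: t) (by simp) hch']

lemma pe_mem : ∀ (es : List Ed), es ≠ [] → pe K s r es ∈ LeavittPathAlgebra K s r
  | [e], _ => by
    rw [pe_cons, pe_nil, mul_one]
    exact NonUnitalAlgebra.subset_adjoin K ⟨.edge e, rfl⟩
  | (e :: f :: t), _ => by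
    rw [pe_cons]
    exact mul_mem (NonUnitalAlgebra.subset_adjoin K ⟨.edge e, rfl⟩)
      (pe_mem (f :: t) (by simp))

lemma qp_pow (Q P g : LPAamb K s r) (hgP : g * P = P) (hQP : Q * P = g) :
    ∀ k : ℕ, Q ^ k * (g * P ^ k) = g
  | 0 => by simp
  | (k + 1) => by
    rw [pow_succ Q, pow_succ' P, ← mul_assoc g, hgP, mul_assoc (Q ^ k),
      ← mul_assoc Q, hQP, qp_pow Q P g hgP hQP k]

lemma int_aux1 (N nz : ℤ) (hN : 0 ≤ N) (hnz : 1 ≤ nz) : N < |(-(1 + N) * nz)| := by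
  rw [abs_mul, abs_neg, abs_of_nonneg (by linarith : (0:ℤ) ≤ 1 + N),
    abs_of_nonneg (by linarith : (0:ℤ) ≤ nz)]
  nlinarith

lemma int_aux2 (N nz : ℤ) (hN : 0 ≤ N) (hnz : 1 ≤ nz) : N < |(N + 1) * nz| := by
  rw [abs_mul, abs_of_nonneg (by linarith : (0:ℤ) ≤ N + 1),
    abs_of_nonneg (by linarith : (0:ℤ) ≤ nz)]
  nlinarith

lemma int_aux3 (j nz : ℤ) (hj : 0 ≤ j) (hnz : 1 ≤ nz) : -(1 + j) * nz ≠ 0 := by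
  have h : 0 < (1 + j) * nz := mul_pos (by linarith) (by linarith)
  intro hq
  rw [neg_mul, neg_eq_zero] at hq
  exact (ne_of_gt h) hq

lemma int_aux4 (j nz : ℤ) (hj : 0 ≤ j) (hnz : 1 ≤ nz) : (j + 1) * nz ≠ 0 :=
  ne_of_gt (mul_pos (by linarith) (by linarith))

/-- The degree of a generator for the canonical `ℤ`-grading. -/
def genDeg : LPAGen V Ed → ℤ
  | .vert _ => 0
  | .edge _ => 1
  | .ghost _ => -1

/-- The generator images for the gauge homomorphism into Laurent polynomials. -/
def phiFree : FreeAlgebra K (LPAGen V Ed) →ₐ[K] AddMonoidAlgebra (LPAamb K s r) ℤ :=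
  FreeAlgebra.lift K fun g => AddMonoidAlgebra.single (genDeg g) (lpaGen K s r g)

lemma phiFree_ι (g : LPAGen V Ed) :
    phiFree K s r (FreeAlgebra.ι K g) = AddMonoidAlgebra.single (genDeg g) (lpaGen K s r g) := by
  simp [phiFree]

lemma phiFree_rel {a b : FreeAlgebra K (LPAGen V Ed)} (h : LPARel K s r a b) :
    phiFree K s r a = phiFree K s r b := by
  induction h with
  | vert_mul u v =>
    by_cases huv : u = v
    · subst huv
      rw [map_mul, phiFree_ι, AddMonoidAlgebra.single_mul_single, vuu, if_pos rfl, phiFree_ι]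
      congr 1
    · rw [if_neg huv, map_zero, map_mul, phiFree_ι, phiFree_ι,
        AddMonoidAlgebra.single_mul_single]
      have h1 := vv K s r u v
      rw [if_neg huv] at h1
      rw [h1, AddMonoidAlgebra.single_zero]
  | src_mul_edge e =>
    rw [map_mul, phiFree_ι, phiFree_ι, AddMonoidAlgebra.single_mul_single, se]
    congr 1
  | edge_mul_rng e =>
    rw [map_mul, phiFree_ι, phiFree_ι, AddMonoidAlgebra.single_mul_single, er]
    congr 1
  | rng_mul_ghost e =>
    rw [map_mul, phiFree_ι, phiFree_ι, AddMonoidAlgebra.single_mul_single]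
    rw [show lpaGen K s r (.vert (r e)) * lpaGen K s r (.ghost e) = lpaGen K s r (.ghost e) by
      simpa only [lpaGen, map_mul] using gen_rel K s r (LPARel.rng_mul_ghost e)]
    congr 1
  | ghost_mul_src e =>
    rw [map_mul, phiFree_ι, phiFree_ι, AddMonoidAlgebra.single_mul_single]
    rw [show lpaGen K s r (.ghost e) * lpaGen K s r (.vert (s e)) = lpaGen K s r (.ghost e) by
      simpa only [lpaGen, map_mul] using gen_rel K s r (LPARel.ghost_mul_src e)]
    congr 1
  | ghost_mul_edge e f =>
    by_cases hef : e = f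
    · subst hef
      rw [if_pos rfl, map_mul, phiFree_ι, phiFree_ι, AddMonoidAlgebra.single_mul_single, ge,
        phiFree_ι]
      congr 1
    · rw [if_neg hef, map_zero, map_mul, phiFree_ι, phiFree_ι,
        AddMonoidAlgebra.single_mul_single]
      have h1 := gmul K s r e f
      rw [if_neg hef] at h1
      rw [h1, AddMonoidAlgebra.single_zero]
  | ck2 v hfin hne =>
    have hamb : ∑ e ∈ hfin.toFinset,
        lpaGen K s r (.edge e) * lpaGen K s r (.ghost e) = lpaGen K s r (.vert v) := by
      simpa only [lpaGen, map_sum, map_mul] using gen_rel K s r (LPARel.ck2 v hfin hne)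
    rw [map_sum, phiFree_ι]
    calc ∑ e ∈ hfin.toFinset,
          phiFree K s r (FreeAlgebra.ι K (LPAGen.edge e) * FreeAlgebra.ι K (LPAGen.ghost e))
        = ∑ e ∈ hfin.toFinset, AddMonoidAlgebra.single (0 : ℤ)
            (lpaGen K s r (.edge e) * lpaGen K s r (.ghost e)) := by
          refine Finset.sum_congr rfl fun e _ => ?_
          rw [map_mul, phiFree_ι, phiFree_ι, AddMonoidAlgebra.single_mul_single]
          congr 1
      _ = AddMonoidAlgebra.single (0 : ℤ) (∑ e ∈ hfin.toFinset,
            lpaGen K s r (.edge e) * lpaGen K s r (.ghost e)) :=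
          (map_sum (AddMonoidAlgebra.singleAddHom (0 : ℤ)) _ _).symm
      _ = AddMonoidAlgebra.single (0 : ℤ) (lpaGen K s r (.vert v)) := by rw [hamb]
      _ = AddMonoidAlgebra.single (genDeg (LPAGen.vert v)) (lpaGen K s r (.vert v)) := rfl

/-- The gauge homomorphism into Laurent polynomials over the ambient algebra. -/
def Phi : LPAamb K s r →ₐ[K] AddMonoidAlgebra (LPAamb K s r) ℤ :=
  RingQuot.liftAlgHom K ⟨phiFree K s r, fun _ _ h => phiFree_rel K s r h⟩

lemma Phi_gen (g : LPAGen V Ed) :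
    Phi K s r (lpaGen K s r g) = AddMonoidAlgebra.single (genDeg g) (lpaGen K s r g) := by
  show Phi K s r (RingQuot.mkAlgHom K (LPARel K s r) (FreeAlgebra.ι K g)) = _
  rw [Phi, RingQuot.liftAlgHom_mkAlgHom_apply, phiFree_ι]

lemma Phi_pe : ∀ es : List Ed,
    Phi K s r (pe K s r es) = AddMonoidAlgebra.single (es.length : ℤ) (pe K s r es)
  | [] => by
    rw [pe_nil, map_one]
    simp only [List.length_nil, Nat.cast_zero]
    exact AddMonoidAlgebra.one_def
  | (e :: t) => by
    rw [pe_cons, map_mul, Phi_gen, Phi_pe t, AddMonoidAlgebra.single_mul_single, ← pe_cons,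
      show genDeg (LPAGen.edge e) + (t.length : ℤ) = ((e :: t).length : ℤ) by
        simp only [genDeg, List.length_cons]; omega]

end CPNM

/-- If there is a closed path based at the vertex `u`, then the principal left ideal
`L_K(E)u` is not a minimal left ideal. -/
theorem closed_path_not_minimal
    {V Ed : Type} [Countable V] [Countable Ed] (s r : Ed → V) (K : Type) [Field K]
    (u : V) (es : List Ed) (h : IsClosedPath s r es u) :
    ¬ IsMinimalLeftIdeal (principalLeft (LPA.vertex K s r u)) := by
  classical
  rintro ⟨hleft, hbot, hminimal⟩
  set gu : LPAamb K s r := lpaGen K s r (.vert u) with hgu_def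
  have hu2 : (LPA.vertex K s r u : LPAamb K s r) = gu := rfl
  -- the vertex is nonzero, since the ideal is nonzero
  have hgu0 : gu ≠ 0 := by
    intro h0
    apply hbot
    have hv0 : LPA.vertex K s r u = 0 := Subtype.ext (by rw [hu2]; exact h0)
    refine (AddSubgroup.eq_bot_iff_forall _).mpr ?_
    rintro x ⟨y, rfl⟩
    show y * LPA.vertex K s r u = 0
    rw [hv0, mul_zero]
  -- path elements and their relations
  set P : LPAamb K s r := CPNM.pe K s r es with hP_def
  set Q : LPAamb K s r := CPNM.pg K s r es with hQ_def
  have hchain := h.chain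
  have hne := h.ne
  have hgP : gu * P = P := by
    obtain ⟨e, t, rfl⟩ : ∃ e t, es = e :: t := by
      cases es with
      | nil => exact absurd rfl hne
      | cons e t => exact ⟨e, t, rfl⟩
    have hs : s e = u := h.src
    rw [hP_def, hgu_def, ← hs, CPNM.vert_mul_pe]
  have hPg : P * gu = P := by
    have := CPNM.pe_mul_vert K s r es hne
    rwa [h.rng] at this
  have hQP : Q * P = gu := by
    have := CPNM.pg_mul_pe K s r es hne hchain
    rwa [h.rng] at this
  have hguu : gu * gu = gu := CPNM.vuu K s r u
  have hn : 1 ≤ es.length := List.length_pos_iff.mpr hne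
  -- if some power of P vanishes, then gu = 0
  have hPpow : ∀ k : ℕ, P ^ k = 0 → gu = 0 := by
    intro k hk
    have := CPNM.qp_pow K s r Q P gu hgP hQP k
    rw [hk, mul_zero, mul_zero] at this
    exact this.symm
  -- the key elements
  have hPmem : P ∈ LeavittPathAlgebra K s r := CPNM.pe_mem K s r es hne
  by_cases hup : gu = P
  · -- u = p is impossible by comparing degrees
    have h1 : AddMonoidAlgebra.single (0 : ℤ) gu
        = AddMonoidAlgebra.single (es.length : ℤ) P := by
      have := congrArg (CPNM.Phi K s r) hup
      rwa [hgu_def, CPNM.Phi_gen, CPNM.genDeg, ← hgu_def, CPNM.Phi_pe, ← hP_def] at this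
    have h2 := Finsupp.ext_iff.mp (congrArg AddMonoidAlgebra.coeff h1) (0 : ℤ)
    rw [AddMonoidAlgebra.coeff_single, AddMonoidAlgebra.coeff_single, Finsupp.single_apply, Finsupp.single_apply, if_pos rfl,
      if_neg (by exact_mod_cast by omega : ¬ (es.length : ℤ) = 0)] at h2
    exact hgu0 h2
  · -- main case : consider the left ideal generated by u - p
    set pL : LeavittPathAlgebra K s r := ⟨P, hPmem⟩ with hpL_def
    set a : LeavittPathAlgebra K s r := LPA.vertex K s r u - pL with ha_def
    have ha_coe : (a : LPAamb K s r) = gu - P := rfl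
    have ha0 : a ≠ 0 := by
      intro h0
      apply hup
      have : (a : LPAamb K s r) = 0 := by rw [h0]; rfl
      rw [ha_coe] at this
      exact sub_eq_zero.mp this
    have hva : LPA.vertex K s r u * a = a := by
      apply Subtype.ext
      show gu * (gu - P) = gu - P
      rw [mul_sub, hguu, hgP]
    have hav : a * LPA.vertex K s r u = a := by
      apply Subtype.ext
      show (gu - P) * gu = gu - P
      rw [sub_mul, hguu, hPg]
    have haJ : a ∈ principalLeft a := ⟨LPA.vertex K s r u, hva⟩
    have hJle : principalLeft a ≤ principalLeft (LPA.vertex K s r u) := by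
      rintro x ⟨y, rfl⟩
      refine ⟨y * a, ?_⟩
      show (y * a) * LPA.vertex K s r u = y * a
      rw [mul_assoc, hav]
    have hJne : principalLeft a ≠ ⊥ := by
      intro hb
      rw [hb, AddSubgroup.mem_bot] at haJ
      exact ha0 haJ
    have hJI : principalLeft a = principalLeft (LPA.vertex K s r u) := by
      by_contra hne2
      exact hJne (hminimal _ (fun b x hx => principalLeft.mul_mem a b hx)
        (lt_of_le_of_ne hJle hne2))
    have huI : LPA.vertex K s r u ∈ principalLeft (LPA.vertex K s r u) := by
      refine ⟨LPA.vertex K s r u, ?_⟩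
      apply Subtype.ext
      exact hguu
    rw [← hJI] at huI
    obtain ⟨x, hx0⟩ := huI
    have hx : x * a = LPA.vertex K s r u := hx0
    -- coerce to the ambient algebra
    have hx' : (x : LPAamb K s r) * (gu - P) = gu := by
      rw [← ha_coe]
      exact congrArg (Subtype.val) hx
    -- pass to Laurent polynomials
    set nz : ℤ := (es.length : ℤ) with hnz_def
    have hnz : 1 ≤ nz := by rw [hnz_def]; exact_mod_cast hn
    set z : AddMonoidAlgebra (LPAamb K s r) ℤ := CPNM.Phi K s r (x : LPAamb K s r) with hz_def
    have heq : z * (AddMonoidAlgebra.single (0 : ℤ) gu - AddMonoidAlgebra.single nz P)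
        = AddMonoidAlgebra.single (0 : ℤ) gu := by
      have := congrArg (CPNM.Phi K s r) hx'
      rwa [map_mul, map_sub, hgu_def, CPNM.Phi_gen, CPNM.genDeg, ← hgu_def,
        CPNM.Phi_pe, ← hP_def, ← hz_def, ← hnz_def] at this
    have hcoef : ∀ m : ℤ, z.coeff m * gu - z.coeff (m - nz) * P = if m = 0 then gu else 0 := by
      intro m
      have h2 := Finsupp.ext_iff.mp (congrArg AddMonoidAlgebra.coeff ((mul_sub z _ _).symm.trans heq)) m
      rw [AddMonoidAlgebra.coeff_sub, Finsupp.sub_apply, AddMonoidAlgebra.coeff_mul_single_apply,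
        AddMonoidAlgebra.coeff_mul_single_apply, ← sub_eq_add_neg, ← sub_eq_add_neg, sub_zero,
        AddMonoidAlgebra.coeff_single, Finsupp.single_apply] at h2
      rw [h2]
      by_cases hm : m = 0
      · rw [if_pos hm.symm, if_pos hm]
      · rw [if_neg (fun hh : (0 : ℤ) = m => hm hh.symm), if_neg hm]
    -- support bound
    obtain ⟨N, hN⟩ : ∃ N : ℕ, ∀ m : ℤ, (N : ℤ) < |m| → z.coeff m = 0 := by
      refine ⟨z.coeff.support.sup Int.natAbs, fun m hm => ?_⟩
      by_contra h0
      have hm' : m ∈ z.coeff.support := Finsupp.mem_support_iff.mpr h0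
      have hle := Finset.le_sup (f := Int.natAbs) hm'
      rw [Int.abs_eq_natAbs] at hm
      exact absurd hm (by exact_mod_cast Nat.not_lt.mpr hle)
    have hstep : ∀ m : ℤ, m ≠ 0 → z.coeff m * gu = z.coeff (m - nz) * gu * P := by
      intro m hm
      have h1 := hcoef m
      rw [if_neg hm, sub_eq_zero] at h1
      rw [mul_assoc, hgP, h1]
    have hdown : ∀ j : ℕ, z.coeff (-nz) * gu = z.coeff (-(1 + (j : ℤ)) * nz) * gu * P ^ j := by
      intro j
      induction j with
      | zero =>
        rw [pow_zero, mul_one]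
        congr 2
        push_cast
        ring
      | succ j ih =>
        rw [ih, hstep (-(1 + (j : ℤ)) * nz)
            (CPNM.int_aux3 (j : ℤ) nz (Int.natCast_nonneg j) hnz), pow_succ' P, ← mul_assoc,
          show (-(1 + (j : ℤ)) * nz - nz) = -(1 + ((j : ℤ) + 1)) * nz by ring]
        push_cast
        ring
    have hcneg : z.coeff (-nz) * gu = 0 := by
      have hz0 : z.coeff (-(1 + (N : ℤ)) * nz) = 0 :=
        hN _ (CPNM.int_aux1 (N : ℤ) nz (Int.natCast_nonneg N) hnz)
      rw [hdown N, hz0, zero_mul, zero_mul]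
    have hc0 : z.coeff 0 * gu = gu := by
      have h1 := hcoef 0
      rw [if_pos rfl, zero_sub] at h1
      have h2 : z.coeff (-nz) * P = 0 := by
        have h3 : z.coeff (-nz) * P = z.coeff (-nz) * gu * P := by rw [mul_assoc, hgP]
        rw [h3, hcneg, zero_mul]
      rw [h2, sub_zero] at h1
      exact h1
    have hupPow : ∀ k : ℕ, z.coeff (((k : ℤ) + 1) * nz) * gu = P ^ (k + 1) := by
      intro k
      induction k with
      | zero =>
        simp only [Nat.cast_zero, zero_add, pow_one]
        rw [hstep (1 * nz) (by simpa using CPNM.int_aux4 0 nz le_rfl hnz),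
          show ((1 : ℤ) * nz - nz) = 0 by ring, hc0, hgP]
      | succ k ih =>
        rw [show (((k + 1 : ℕ) : ℤ) + 1) * nz = (((k : ℤ) + 1) + 1) * nz by push_cast; ring,
          hstep ((((k : ℤ) + 1) + 1) * nz)
            (CPNM.int_aux4 ((k : ℤ) + 1) nz (by positivity) hnz),
          show ((((k : ℤ) + 1) + 1) * nz - nz) = ((k : ℤ) + 1) * nz by ring,
          ih, ← pow_succ]
    have hz1 : z.coeff (((N : ℤ) + 1) * nz) = 0 :=
      hN _ (CPNM.int_aux2 (N : ℤ) nz (Int.natCast_nonneg N) hnz)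
    have hPzero : P ^ (N + 1) = 0 := by
      rw [← hupPow N, hz1, zero_mul]
    exact hgu0 (hPpow (N + 1) hPzero)

end
end

section
/- Let E be an arbitrary (countable) graph, K a field, and u ∈ E^0 an infinite emitter with s^{-1}(u) = {f_i}_{i ∈ ℕ}. Then the sum Σ_{i=1}^{∞} L_K(E)f_i f_i^* is a direct sum of left ideals that is properly contained in L_K(E)u; in particular, L_K(E)u is not a minimal left ideal. -/
set_option synthInstance.maxHeartbeats 1000000
set_option maxHeartbeats 1000000

noncomputable section

variable (K : Type) [Field K] {V Ed : Type} (s r : Ed → V)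

/-! ## Auxiliary: a representation of the Leavitt path algebra on a module of paths -/

section AuxRep

open Classical

variable {V Ed : Type} (s r : Ed → V)

/-- Source of a generalized entry (an edge or a vertex). -/
def gS : Ed ⊕ V → V := Sum.elim s id

/-- Range of a generalized entry. -/
def gR : Ed ⊕ V → V := Sum.elim r id

@[simp] lemma gS_inl (e : Ed) : gS s (Sum.inl e) = s e := rfl
@[simp] lemma gS_inr (v : V) : gS s (Sum.inr v) = v := rfl
@[simp] lemma gR_inl (e : Ed) : gR r (Sum.inl e) = r e := rfl
@[simp] lemma gR_inr (v : V) : gR r (Sum.inr v) = v := rfl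

/-- The predicate defining generalized infinite paths: composable entries, and a
vertex entry only appears if it is non-regular, after which the path stays there. -/
def PBP (y : ℕ → Ed ⊕ V) : Prop :=
  (∀ n, gR r (y n) = gS s (y (n + 1))) ∧
  (∀ n v, y n = Sum.inr v → ¬ IsRegularVertex s v ∧ y (n + 1) = Sum.inr v)

/-- The basis of the path module: generalized infinite paths. -/
def PB := { y : ℕ → Ed ⊕ V // PBP s r y }

/-- The tail of a generalized path. -/
def PB.tl (b : PB s r) : PB s r :=
  ⟨fun n => b.1 (n + 1), fun n => b.2.1 (n + 1), fun n v h => b.2.2 (n + 1) v h⟩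

@[simp] lemma PB.tl_apply (b : PB s r) (n : ℕ) : (PB.tl s r b).1 n = b.1 (n + 1) := rfl

/-- Prepending an edge to a generalized path. -/
def PB.cns (e : Ed) (b : PB s r) (h : r e = gS s (b.1 0)) : PB s r :=
  ⟨fun n => Nat.casesOn n (Sum.inl e) (fun m => b.1 m), by
      intro n
      cases n with
      | zero => exact h
      | succ m => exact b.2.1 m, by
      intro n v hv
      cases n with
      | zero => exact absurd hv (by simp)
      | succ m => exact b.2.2 m v hv⟩

@[simp] lemma PB.cns_zero (e : Ed) (b : PB s r) (h : r e = gS s (b.1 0)) :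
    (PB.cns s r e b h).1 0 = Sum.inl e := rfl

lemma PB.cns_tl (b : PB s r) (e : Ed) (hb : b.1 0 = Sum.inl e)
    (h : r e = gS s ((PB.tl s r b).1 0)) : PB.cns s r e (PB.tl s r b) h = b := by
  apply Subtype.ext
  funext n
  cases n with
  | zero => exact hb.symm
  | succ m => rfl

lemma PB.tl_cns (e : Ed) (b : PB s r) (h : r e = gS s (b.1 0)) :
    PB.tl s r (PB.cns s r e b h) = b := Subtype.ext rfl

variable (K : Type) [Field K]

/-- The path module: the free `K`-module on generalized paths. -/
abbrev PM := PB s r →₀ K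

open Classical in
/-- The action of a vertex on a basis path. -/
noncomputable def vertF (v : V) (b : PB s r) : PM s r K :=
  if gS s (b.1 0) = v then Finsupp.single b 1 else 0

open Classical in
/-- The action of an edge on a basis path. -/
noncomputable def edgeF (e : Ed) (b : PB s r) : PM s r K :=
  if h : r e = gS s (b.1 0) then Finsupp.single (PB.cns s r e b h) 1 else 0

open Classical in
/-- The action of a ghost edge on a basis path. -/
noncomputable def ghostF (e : Ed) (b : PB s r) : PM s r K :=
  if b.1 0 = Sum.inl e then Finsupp.single (PB.tl s r b) 1 else 0

noncomputable def Vop (v : V) : Module.End K (PM s r K) :=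
  Finsupp.linearCombination K (vertF s r K v)

noncomputable def Eop (e : Ed) : Module.End K (PM s r K) :=
  Finsupp.linearCombination K (edgeF s r K e)

noncomputable def Gop (e : Ed) : Module.End K (PM s r K) :=
  Finsupp.linearCombination K (ghostF s r K e)

lemma End_ext {f g : Module.End K (PM s r K)}
    (h : ∀ b, f (Finsupp.single b 1) = g (Finsupp.single b 1)) : f = g := by
  apply Finsupp.lhom_ext
  intro a c
  have hc : (Finsupp.single a c : PM s r K) = c • Finsupp.single a 1 := by
    rw [Finsupp.smul_single, smul_eq_mul, mul_one]
  rw [hc, map_smul, map_smul, h]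

@[simp] lemma Vop_single (v : V) (b : PB s r) :
    Vop s r K v (Finsupp.single b 1) = vertF s r K v b := by
  simp [Vop]

@[simp] lemma Eop_single (e : Ed) (b : PB s r) :
    Eop s r K e (Finsupp.single b 1) = edgeF s r K e b := by
  simp [Eop]

@[simp] lemma Gop_single (e : Ed) (b : PB s r) :
    Gop s r K e (Finsupp.single b 1) = ghostF s r K e b := by
  simp [Gop]

/-- The operator attached to each generator. -/
noncomputable def genOp : LPAGen V Ed → Module.End K (PM s r K)
  | .vert v => Vop s r K v
  | .edge e => Eop s r K e
  | .ghost e => Gop s r K e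

noncomputable def preRep : FreeAlgebra K (LPAGen V Ed) →ₐ[K] Module.End K (PM s r K) :=
  FreeAlgebra.lift K (genOp s r K)

@[simp] lemma preRep_ι (g : LPAGen V Ed) :
    preRep s r K (FreeAlgebra.ι K g) = genOp s r K g :=
  FreeAlgebra.lift_ι_apply _ _

@[simp] lemma genOp_vert (v : V) : genOp s r K (LPAGen.vert v) = Vop s r K v := rfl
@[simp] lemma genOp_edge (e : Ed) : genOp s r K (LPAGen.edge e) = Eop s r K e := rfl
@[simp] lemma genOp_ghost (e : Ed) : genOp s r K (LPAGen.ghost e) = Gop s r K e := rfl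

lemma EG_single (e : Ed) (b : PB s r) :
    (Eop s r K e * Gop s r K e) (Finsupp.single b 1) =
      if b.1 0 = Sum.inl e then Finsupp.single b 1 else 0 := by
  rw [Module.End.mul_apply, Gop_single]
  unfold ghostF
  by_cases h : b.1 0 = Sum.inl e
  · have hre : r e = gS s ((PB.tl s r b).1 0) := by
      have h0 := b.2.1 0
      rw [h] at h0
      simpa using h0
    rw [if_pos h, if_pos h, Eop_single]
    unfold edgeF
    rw [dif_pos hre, PB.cns_tl s r b e h]
  · rw [if_neg h, if_neg h, map_zero]

lemma preRep_rel : ∀ ⦃x y⦄, LPARel K s r x y → preRep s r K x = preRep s r K y := by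
  intro x y hrel
  induction hrel with
  | vert_mul u v =>
      by_cases huv : u = v
      · subst huv
        rw [if_pos rfl]
        simp only [map_mul, preRep_ι, genOp_vert]
        apply End_ext
        intro b
        rw [Module.End.mul_apply, Vop_single]
        unfold vertF
        by_cases h : gS s (b.1 0) = u
        · rw [if_pos h, Vop_single]
          unfold vertF
          rw [if_pos h]
        · rw [if_neg h, map_zero]
      · rw [if_neg huv, map_zero]
        simp only [map_mul, preRep_ι, genOp_vert]
        apply End_ext
        intro b
        rw [Module.End.mul_apply, Vop_single, LinearMap.zero_apply]
        unfold vertF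
        by_cases h : gS s (b.1 0) = v
        · rw [if_pos h, Vop_single]
          unfold vertF
          rw [if_neg (by rw [h]; exact fun hc => huv hc.symm)]
        · rw [if_neg h, map_zero]
  | src_mul_edge e =>
      simp only [map_mul, preRep_ι, genOp_vert, genOp_edge]
      apply End_ext
      intro b
      rw [Module.End.mul_apply, Eop_single]
      unfold edgeF
      by_cases h : r e = gS s (b.1 0)
      · rw [dif_pos h, Vop_single]
        unfold vertF
        rw [if_pos (by simp)]
      · rw [dif_neg h, map_zero]
  | edge_mul_rng e =>
      simp only [map_mul, preRep_ι, genOp_vert, genOp_edge]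
      apply End_ext
      intro b
      rw [Module.End.mul_apply, Vop_single]
      unfold vertF
      by_cases h : gS s (b.1 0) = r e
      · rw [if_pos h]
      · rw [if_neg h, map_zero, Eop_single]
        unfold edgeF
        rw [dif_neg (fun hc => h hc.symm)]
  | rng_mul_ghost e =>
      simp only [map_mul, preRep_ι, genOp_vert, genOp_ghost]
      apply End_ext
      intro b
      rw [Module.End.mul_apply, Gop_single]
      unfold ghostF
      by_cases h : b.1 0 = Sum.inl e
      · rw [if_pos h, Vop_single]
        unfold vertF
        rw [if_pos (by
          have h0 := b.2.1 0
          rw [h] at h0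
          simpa using h0.symm)]
      · rw [if_neg h, map_zero]
  | ghost_mul_src e =>
      simp only [map_mul, preRep_ι, genOp_vert, genOp_ghost]
      apply End_ext
      intro b
      rw [Module.End.mul_apply, Vop_single]
      unfold vertF
      by_cases h : gS s (b.1 0) = s e
      · rw [if_pos h]
      · rw [if_neg h, map_zero, Gop_single]
        unfold ghostF
        rw [if_neg (fun hc => h (by rw [hc]; rfl))]
  | ghost_mul_edge e f =>
      by_cases hef : e = f
      · subst hef
        rw [if_pos rfl]
        simp only [map_mul, preRep_ι, genOp_vert, genOp_edge, genOp_ghost]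
        apply End_ext
        intro b
        rw [Module.End.mul_apply, Eop_single, Vop_single]
        unfold edgeF vertF
        by_cases h1 : r e = gS s (b.1 0)
        · rw [dif_pos h1, if_pos h1.symm, Gop_single]
          unfold ghostF
          rw [if_pos (PB.cns_zero s r e b h1), PB.tl_cns]
        · rw [dif_neg h1, if_neg (fun hc => h1 hc.symm), map_zero]
      · rw [if_neg hef, map_zero]
        simp only [map_mul, preRep_ι, genOp_edge, genOp_ghost]
        apply End_ext
        intro b
        rw [Module.End.mul_apply, Eop_single, LinearMap.zero_apply]
        unfold edgeF
        by_cases h1 : r f = gS s (b.1 0)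
        · rw [dif_pos h1, Gop_single]
          unfold ghostF
          rw [if_neg (by rw [PB.cns_zero]; exact fun hh => hef (Sum.inl.inj hh).symm)]
        · rw [dif_neg h1, map_zero]
  | ck2 v hfin hne =>
      simp only [map_sum, map_mul, preRep_ι, genOp_vert, genOp_edge, genOp_ghost]
      apply End_ext
      intro b
      rw [LinearMap.sum_apply, Vop_single]
      unfold vertF
      rcases hb : b.1 0 with g | w
      · by_cases hg : s g = v
        · rw [Finset.sum_eq_single_of_mem g (by rw [Set.Finite.mem_toFinset]; exact hg)]
          · rw [EG_single, if_pos hb, if_pos (by simpa using hg)]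
          · intro e _ hne'
            rw [EG_single, if_neg (by rw [hb]; simp only [Sum.inl.injEq]; exact fun hc => hne' hc.symm)]
        · rw [Finset.sum_eq_zero, if_neg (by simpa using hg)]
          intro e he
          rw [Set.Finite.mem_toFinset] at he
          rw [EG_single, if_neg (by rw [hb]; simp only [Sum.inl.injEq]; intro hgE; rw [← hgE] at he; exact hg he)]
      · rw [Finset.sum_eq_zero, if_neg]
        · simp only [gS_inr]
          intro hwv
          exact (b.2.2 0 w hb).1 (hwv ▸ ⟨hfin, hne⟩)
        · intro e _
          rw [EG_single, if_neg (by rw [hb]; simp)]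

/-- The representation of the ambient algebra on the path module. -/
noncomputable def rep : LPAamb K s r →ₐ[K] Module.End K (PM s r K) :=
  RingQuot.liftAlgHom K ⟨preRep s r K, preRep_rel s r K⟩

@[simp] lemma rep_lpaGen (g : LPAGen V Ed) :
    rep s r K (lpaGen K s r g) = genOp s r K g := by
  rw [lpaGen, rep, RingQuot.liftAlgHom_mkAlgHom_apply, preRep_ι]

open Classical in
/-- A choice of next entry out of a vertex. -/
noncomputable def nxt (v : V) : Ed ⊕ V :=
  if h : IsRegularVertex s v then Sum.inl h.2.some else Sum.inr v

lemma gS_nxt (v : V) : gS s (nxt s v) = v := by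
  unfold nxt
  split_ifs with h
  · exact h.2.some_mem
  · rfl

lemma nxt_inr {v w : V} (h : nxt s v = Sum.inr w) : v = w ∧ ¬ IsRegularVertex s v := by
  by_cases h' : IsRegularVertex s v
  · unfold nxt at h
    rw [dif_pos h'] at h
    exact absurd h (by simp)
  · unfold nxt at h
    rw [dif_neg h'] at h
    exact ⟨Sum.inr.inj h, h'⟩

/-- The canonical infinite continuation from a vertex. -/
noncomputable def witTail (w : V) : ℕ → Ed ⊕ V
  | 0 => nxt s w
  | n + 1 => nxt s (gR r (witTail w n))

/-- The canonical generalized path starting with edge `e`. -/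
noncomputable def witSeq (e : Ed) : ℕ → Ed ⊕ V
  | 0 => Sum.inl e
  | n + 1 => witTail s r (r e) n

lemma witTail_nxt (w : V) (n : ℕ) : ∃ w', witTail s r w n = nxt s w' := by
  cases n with
  | zero => exact ⟨w, rfl⟩
  | succ m => exact ⟨gR r (witTail s r w m), rfl⟩

/-- The canonical basis path starting with `e`. -/
noncomputable def wit (e : Ed) : PB s r := by
  refine ⟨witSeq s r e, ?_, ?_⟩
  · intro n
    cases n with
    | zero => show gR r (Sum.inl e) = gS s (nxt s (r e)); rw [gS_nxt]; rfl
    | succ m =>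
        show gR r (witTail s r (r e) m) = gS s (witTail s r (r e) (m + 1))
        show _ = gS s (nxt s (gR r (witTail s r (r e) m)))
        rw [gS_nxt]
  · intro n v hv
    cases n with
    | zero => exact absurd hv (by simp [witSeq])
    | succ m =>
        obtain ⟨w', hw'⟩ := witTail_nxt s r (r e) m
        have hv' : witTail s r (r e) m = Sum.inr v := hv
        rw [hv'] at hw'
        obtain ⟨hvw, hreg⟩ := nxt_inr s hw'.symm
        refine ⟨hvw ▸ hreg, ?_⟩
        show witTail s r (r e) (m + 1) = Sum.inr v
        show nxt s (gR r (witTail s r (r e) m)) = Sum.inr v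
        rw [hv']
        simp only [gR_inr]
        unfold nxt
        rw [dif_neg (hvw ▸ hreg)]

@[simp] lemma wit_zero (e : Ed) : (wit s r e).1 0 = Sum.inl e := rfl

lemma EG_wit (e e' : Ed) :
    (Eop s r K e * Gop s r K e) (Finsupp.single (wit s r e') 1) =
      if e' = e then Finsupp.single (wit s r e') 1 else 0 := by
  rw [EG_single]
  simp only [wit_zero]
  by_cases h : e' = e
  · simp [h]
  · simp [h]

lemma Vop_wit (v : V) (e : Ed) :
    Vop s r K v (Finsupp.single (wit s r e) 1) =
      if s e = v then Finsupp.single (wit s r e) 1 else 0 := by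
  rw [Vop_single]
  unfold vertF
  simp
  by_cases h : s e = v <;> simp [h]

end AuxRep

/-! ## Auxiliary: consequences of the relations in the ambient algebra -/

section AuxAlg

variable {V Ed : Type} (s r : Ed → V) (K : Type) [Field K]

open Classical in
lemma amb_vv (u v : V) :
    lpaGen K s r (LPAGen.vert u) * lpaGen K s r (LPAGen.vert v) =
      if u = v then lpaGen K s r (LPAGen.vert u) else 0 := by
  unfold lpaGen
  rw [← map_mul, RingQuot.mkAlgHom_rel _ (LPARel.vert_mul u v)]
  split_ifs with h
  · rfl
  · exact map_zero _

lemma amb_ev (e : Ed) :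
    lpaGen K s r (LPAGen.edge e) * lpaGen K s r (LPAGen.vert (r e)) =
      lpaGen K s r (LPAGen.edge e) := by
  unfold lpaGen
  rw [← map_mul]
  exact RingQuot.mkAlgHom_rel _ (LPARel.edge_mul_rng e)

lemma amb_vg (e : Ed) :
    lpaGen K s r (LPAGen.vert (r e)) * lpaGen K s r (LPAGen.ghost e) =
      lpaGen K s r (LPAGen.ghost e) := by
  unfold lpaGen
  rw [← map_mul]
  exact RingQuot.mkAlgHom_rel _ (LPARel.rng_mul_ghost e)

lemma amb_gv (e : Ed) :
    lpaGen K s r (LPAGen.ghost e) * lpaGen K s r (LPAGen.vert (s e)) =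
      lpaGen K s r (LPAGen.ghost e) := by
  unfold lpaGen
  rw [← map_mul]
  exact RingQuot.mkAlgHom_rel _ (LPARel.ghost_mul_src e)

open Classical in
lemma amb_ge (e f : Ed) :
    lpaGen K s r (LPAGen.ghost e) * lpaGen K s r (LPAGen.edge f) =
      if e = f then lpaGen K s r (LPAGen.vert (r e)) else 0 := by
  unfold lpaGen
  rw [← map_mul, RingQuot.mkAlgHom_rel _ (LPARel.ghost_mul_edge e f)]
  split_ifs with h
  · rfl
  · exact map_zero _

end AuxAlg


/-- Let `u` be an infinite emitter with `s⁻¹(u) = {f_i}_{i ∈ ℕ}`.  Then the left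
ideals `L_K(E) f_i f_i^*` form an independent family (their sum is direct) whose sum
is properly contained in `L_K(E)u`; in particular `L_K(E)u` is not a minimal left
ideal. -/
theorem infinite_emitter_not_minimal
    {V Ed : Type} [Countable V] [Countable Ed] (s r : Ed → V) (K : Type) [Field K]
    (u : V) (f : ℕ → Ed) (hinj : Function.Injective f)
    (hrange : Set.range f = {e : Ed | s e = u}) :
    iSupIndep (fun i : ℕ =>
        principalLeft (LPA.edge K s r (f i) * LPA.ghost K s r (f i))) ∧
    (⨆ i : ℕ, principalLeft (LPA.edge K s r (f i) * LPA.ghost K s r (f i))) <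
      principalLeft (LPA.vertex K s r u) ∧
    ¬ IsMinimalLeftIdeal (principalLeft (LPA.vertex K s r u)) := by
  classical
  -- notation
  set A := LeavittPathAlgebra K s r with hA
  set E : ℕ → A := fun i => LPA.edge K s r (f i) * LPA.ghost K s r (f i) with hEdef
  have hs : ∀ i, s (f i) = u := by
    intro i
    have : f i ∈ Set.range f := ⟨i, rfl⟩
    rwa [hrange] at this
  have hval : ∀ i, ((E i : A) : LPAamb K s r) =
      lpaGen K s r (LPAGen.edge (f i)) * lpaGen K s r (LPAGen.ghost (f i)) := fun i => rfl
  have huval : ((LPA.vertex K s r u : A) : LPAamb K s r) = lpaGen K s r (LPAGen.vert u) := rfl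
  -- algebraic identities
  have hEE : ∀ i j, E i * E j = if i = j then E i else 0 := by
    intro i j
    by_cases hij : i = j
    · subst hij
      rw [if_pos rfl]
      apply Subtype.ext
      show ((E i * E i : A) : LPAamb K s r) = _
      rw [MulMemClass.coe_mul, hval, mul_assoc, ← mul_assoc (lpaGen K s r (LPAGen.ghost (f i))),
        amb_ge, if_pos rfl, amb_vg]
    · rw [if_neg hij]
      apply Subtype.ext
      show ((E i * E j : A) : LPAamb K s r) = _
      rw [MulMemClass.coe_mul, hval, hval, mul_assoc, ← mul_assoc (lpaGen K s r (LPAGen.ghost (f i))),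
        amb_ge, if_neg (fun hc => hij (hinj hc)), zero_mul, mul_zero]
      rfl
  have hEu : ∀ i, E i * LPA.vertex K s r u = E i := by
    intro i
    apply Subtype.ext
    show ((E i * _ : A) : LPAamb K s r) = _
    rw [MulMemClass.coe_mul, hval, huval, mul_assoc]
    have := amb_gv s r K (f i)
    rw [hs i] at this
    rw [this]
  have huu : LPA.vertex K s r u * LPA.vertex K s r u = LPA.vertex K s r u := by
    apply Subtype.ext
    show ((_ * _ : A) : LPAamb K s r) = _
    rw [MulMemClass.coe_mul, huval, amb_vv, if_pos rfl]
  -- representation-theoretic facts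
  have hrepE : ∀ i k, rep s r K ((E i : A) : LPAamb K s r)
      (Finsupp.single (wit s r (f k)) 1) =
      if i = k then Finsupp.single (wit s r (f k)) 1 else 0 := by
    intro i k
    rw [hval, map_mul, rep_lpaGen, rep_lpaGen, genOp_edge, genOp_ghost, EG_wit]
    by_cases h : i = k
    · rw [if_pos (by rw [h]), if_pos h]
    · rw [if_neg (fun hc => h (hinj hc).symm), if_neg h]
  have hrepu : ∀ k, rep s r K ((LPA.vertex K s r u : A) : LPAamb K s r)
      (Finsupp.single (wit s r (f k)) 1) = Finsupp.single (wit s r (f k)) 1 := by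
    intro k
    rw [huval, rep_lpaGen, genOp_vert, Vop_wit, if_pos (hs k)]
  have hwit_ne : ∀ k, (Finsupp.single (wit s r (f k)) 1 : PM s r K) ≠ 0 :=
    fun k => by simp
  have hmem : ∀ (a x : A), x ∈ principalLeft a ↔ ∃ y, y * a = x := fun a x => Iff.rfl
  -- the sum is contained in the principal left ideal of u
  have hle : (⨆ i : ℕ, principalLeft (E i)) ≤ principalLeft (LPA.vertex K s r u) := by
    refine iSup_le fun i => ?_
    rintro x ⟨y, rfl⟩
    exact ⟨y * E i, by show y * E i * LPA.vertex K s r u = y * E i; rw [mul_assoc, hEu]⟩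
  -- u is not in the sum
  have hunot : LPA.vertex K s r u ∉ ⨆ i : ℕ, principalLeft (E i) := by
    intro hmem'
    have key : ∃ F : Finset ℕ, ∀ k ∉ F, rep s r K ((LPA.vertex K s r u : A) : LPAamb K s r)
        (Finsupp.single (wit s r (f k)) 1) = 0 := by
      refine AddSubgroup.iSup_induction (C := fun x : A => ∃ F : Finset ℕ, ∀ k ∉ F,
          rep s r K ((x : A) : LPAamb K s r) (Finsupp.single (wit s r (f k)) 1) = 0)
        _ hmem' ?_ ?_ ?_
      · rintro i x ⟨y, rfl⟩
        refine ⟨{i}, fun k hk => ?_⟩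
        have hcoe : ((y * E i : A) : LPAamb K s r) = (y : LPAamb K s r) * ((E i : A) : LPAamb K s r) :=
          rfl
        rw [hcoe, map_mul, Module.End.mul_apply, hrepE,
          if_neg (fun hc => hk (by rw [hc]; exact Finset.mem_singleton_self k)), map_zero]
      · exact ⟨∅, fun k _ => by rw [ZeroMemClass.coe_zero, map_zero, LinearMap.zero_apply]⟩
      · rintro x y ⟨F1, h1⟩ ⟨F2, h2⟩
        refine ⟨F1 ∪ F2, fun k hk => ?_⟩
        rw [Finset.mem_union, not_or] at hk
        rw [AddMemClass.coe_add, map_add, LinearMap.add_apply, h1 k hk.1, h2 k hk.2, add_zero]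
    obtain ⟨F, hF⟩ := key
    obtain ⟨k, hk⟩ := Infinite.exists_notMem_finset F
    exact hwit_ne k (by rw [← hrepu k]; exact hF k hk)
  have hlt : (⨆ i : ℕ, principalLeft (E i)) < principalLeft (LPA.vertex K s r u) := by
    refine lt_of_le_of_ne hle fun h => ?_
    exact hunot (h ▸ ⟨LPA.vertex K s r u, huu⟩)
  refine ⟨?_, hlt, ?_⟩
  · -- independence
    intro i
    rw [AddSubgroup.disjoint_def]
    intro x hxi hxsup
    have h1 : x * E i = x := by
      obtain ⟨y, rfl⟩ := hxi
      show y * E i * E i = y * E i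
      rw [mul_assoc, hEE, if_pos rfl]
    have hker : (⨆ j, ⨆ _ : j ≠ i, principalLeft (E j)) ≤
        (AddMonoidHom.mulRight (E i)).ker := by
      refine iSup_le fun j => iSup_le fun hji => ?_
      rintro x ⟨y, rfl⟩
      show y * E j * E i = 0
      rw [mul_assoc, hEE, if_neg hji, mul_zero]
    have h2 : x * E i = 0 := hker hxsup
    rw [← h1, h2]
  · -- not minimal
    rintro ⟨hL, hne, hmin⟩
    have hJ : IsLeftIdeal (⨆ i : ℕ, principalLeft (E i)) := by
      intro a x hx
      refine AddSubgroup.iSup_induction (C := fun x : A =>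
          a * x ∈ ⨆ i : ℕ, principalLeft (E i)) _ hx ?_ ?_ ?_
      · intro i x hxi
        show a * x ∈ ⨆ i : ℕ, principalLeft (E i)
        exact le_iSup (fun i => principalLeft (E i)) i (principalLeft.mul_mem (E i) a hxi)
      · show a * 0 ∈ ⨆ i : ℕ, principalLeft (E i)
        rw [mul_zero]; exact zero_mem _
      · intro x y hx' hy'
        show a * (x + y) ∈ ⨆ i : ℕ, principalLeft (E i)
        rw [mul_add]
        exact add_mem hx' hy'
    have hbot := hmin _ hJ hlt
    have hE0 : E 0 ∈ (⨆ i : ℕ, principalLeft (E i)) :=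
      le_iSup (fun i => principalLeft (E i)) 0
        ⟨E 0, by show E 0 * E 0 = E 0; rw [hEE, if_pos rfl]⟩
    rw [hbot, AddSubgroup.mem_bot] at hE0
    have hcontra := hrepE 0 0
    rw [hE0, ZeroMemClass.coe_zero, map_zero, if_pos rfl] at hcontra
    exact hwit_ne 0 (by rw [← hcontra, LinearMap.zero_apply])

end
end
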